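/- arXiv:1404.5100 — 3 statements merged into one kernel-verified Lean document; each statement's English description precedes it below -/
import Mathlib

section
/- The set 𝒳* of minimizers of f₁ over 𝒳 is convex, and there exists t* ∈ ℝ^m such that E x* = t* for every x* ∈ 𝒳*. -/
open Filter Topology Matrix

/-- Euclidean norm of a vector in `ℝ^k`. -/
noncomputable def enorm {k : ℕ} (v : Fin k → ℝ) : ℝ := Real.sqrt (∑ i, v i ^ 2)

/-- Soft-thresholding operator `S_λ(x) = sign(x) · max(|x| − λ, 0)`. -/
noncomputable def softThresh (lam x : ℝ) : ℝ := Real.sign x * max (|x| - lam) 0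

/-- Gradient of `gr : ℝ^m → ℝ` at `t`. -/
noncomputable def gradv {m : ℕ} (gr : (Fin m → ℝ) → ℝ) (t : Fin m → ℝ) : Fin m → ℝ :=
  fun i => fderiv ℝ gr t (Pi.single i 1)

/-- Hessian quadratic form `vᵀ (∇²gr(t)) v`. -/
noncomputable def hessQF {m : ℕ} (gr : (Fin m → ℝ) → ℝ) (t v : Fin m → ℝ) : ℝ :=
  ∑ i, ∑ j, v i * fderiv ℝ (fun s => gradv gr s j) t (Pi.single i 1) * v j

/-- `𝒳*` is convex and `E x*` is constant on `𝒳*`. -/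
theorem optimal_set_convex_and_Ex_constant
(m n : ℕ) (hm : 0 < m) (hn : 0 < n)
    (S : Finset (Fin n)) (lam : ℝ) (hlam : 0 < lam)
    (E : Matrix (Fin m) (Fin n) ℝ) (hE : ∀ j, ∃ i, E i j ≠ 0)
    (Dg : Set (Fin m → ℝ)) (gr : (Fin m → ℝ) → ℝ)
    (hDg : Convex ℝ Dg) (hgconv : ConvexOn ℝ Dg gr)
    (hCg : (interior Dg).Nonempty)
    (hgs : StrictConvexOn ℝ (interior Dg) gr)
    (hgC2 : ContDiffOn ℝ 2 gr (interior Dg))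
    (hhess : ∀ t ∈ interior Dg, ∀ v : Fin m → ℝ, v ≠ 0 → 0 < hessQF gr t v)
    (hA3 : (∀ t₀ ∈ frontier (interior Dg),
              Filter.Tendsto gr (nhdsWithin t₀ (interior Dg)) Filter.atTop)
           ∨ (S = Finset.univ ∧ (∀ t, 0 ≤ gr t) ∧ Dg = Set.univ))
    (X : Set (Fin n → ℝ)) (hX : X = {x | ∀ i ∉ S, 0 ≤ x i})
    (F : (Fin n → ℝ) → ℝ)
    (hF : ∀ x, F x = gr (E.mulVec x) + lam * ∑ i ∈ S, |x i|)
    (XStar : Set (Fin n → ℝ))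
    (hXStar : XStar = {x | x ∈ X ∧ E.mulVec x ∈ Dg ∧
                ∀ y ∈ X, E.mulVec y ∈ Dg → F x ≤ F y})
    (hXStarNe : XStar.Nonempty) :
    Convex ℝ XStar ∧ ∃ tstar : Fin m → ℝ, ∀ xs ∈ XStar, E.mulVec xs = tstar := by
  -- X is convex
  have hXconv : Convex ℝ X := by
    subst hX
    intro x hx y hy a b ha hb hab i hi
    have := hx i hi; have := hy i hi
    have : 0 ≤ a * x i + b * y i := by positivity
    simpa using this
  -- combination inequality for F
  have hFcomb : ∀ x y : Fin n → ℝ, E.mulVec x ∈ Dg → E.mulVec y ∈ Dg →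
      ∀ a b : ℝ, 0 ≤ a → 0 ≤ b → a + b = 1 →
      F (a • x + b • y) ≤ a * F x + b * F y := by
    intro x y hx hy a b ha hb hab
    have hmv : E.mulVec (a • x + b • y) = a • E.mulVec x + b • E.mulVec y := by
      rw [Matrix.mulVec_add, Matrix.mulVec_smul, Matrix.mulVec_smul]
    have hgr : gr (E.mulVec (a • x + b • y)) ≤ a * gr (E.mulVec x) + b * gr (E.mulVec y) := by
      rw [hmv]; exact hgconv.2 hx hy ha hb hab
    have habs : ∑ i ∈ S, |(a • x + b • y) i| ≤ a * (∑ i ∈ S, |x i|) + b * (∑ i ∈ S, |y i|) := by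
      rw [Finset.mul_sum, Finset.mul_sum, ← Finset.sum_add_distrib]
      refine Finset.sum_le_sum fun i _ => ?_
      have : |(a • x + b • y) i| = |a * x i + b * y i| := by
        simp [Pi.add_apply, Pi.smul_apply, smul_eq_mul]
      rw [this]
      calc |a * x i + b * y i| ≤ |a * x i| + |b * y i| := abs_add_le _ _
        _ = a * |x i| + b * |y i| := by
            rw [abs_mul, abs_mul, abs_of_nonneg ha, abs_of_nonneg hb]
    rw [hF, hF, hF]
    have := mul_le_mul_of_nonneg_left habs hlam.le
    nlinarith
  -- convexity of XStar
  have hconvXS : Convex ℝ XStar := by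
    intro x hx y hy a b ha hb hab
    rw [hXStar] at hx hy ⊢
    obtain ⟨hxX, hxD, hxmin⟩ := hx
    obtain ⟨hyX, hyD, hymin⟩ := hy
    refine ⟨hXconv hxX hyX ha hb hab, ?_, ?_⟩
    · rw [Matrix.mulVec_add, Matrix.mulVec_smul, Matrix.mulVec_smul]
      exact hDg hxD hyD ha hb hab
    · intro z hzX hzD
      calc F (a • x + b • y) ≤ a * F x + b * F y := hFcomb x y hxD hyD a b ha hb hab
        _ ≤ a * F z + b * F z := by
            have h1 := hxmin z hzX hzD
            have h2 := hymin z hzX hzD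
            nlinarith
        _ = F z := by linear_combination F z * hab
  refine ⟨hconvXS, ?_⟩
  -- every minimizer has E x in the interior of Dg
  have hint : ∀ x ∈ XStar, E.mulVec x ∈ interior Dg := by
    intro x hx
    rw [hXStar] at hx
    obtain ⟨hxX, hxD, hxmin⟩ := hx
    rcases hA3 with hA | ⟨_, _, hDguniv⟩
    · by_contra ht0
      set t₀ := E.mulVec x with ht₀def
      obtain ⟨t₁, ht₁⟩ := hCg
      -- the curve from t₀ towards t₁
      set γ : ℝ → (Fin m → ℝ) := fun s => t₀ + s • (t₁ - t₀) with hγdef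
      have hγ0 : γ 0 = t₀ := by simp [hγdef]
      have hγcomb : ∀ s : ℝ, γ s = (1 - s) • t₀ + s • t₁ := by
        intro s; simp only [hγdef]; module
      have hγcont : Continuous γ := by
        apply continuous_const.add
        exact continuous_id.smul continuous_const
      have hγmem : ∀ s ∈ Set.Ioo (0:ℝ) 1, γ s ∈ interior Dg := by
        intro s hs
        rw [hγcomb]
        exact hDg.combo_closure_interior_mem_interior (subset_closure hxD) ht₁
          (by linarith [hs.2]) hs.1 (by ring)
      have hne : (𝓝[Set.Ioo (0:ℝ) 1] 0).NeBot := left_nhdsWithin_Ioo_neBot zero_lt_one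
      have htendγ : Filter.Tendsto γ (𝓝[Set.Ioo (0:ℝ) 1] (0:ℝ)) (𝓝[interior Dg] t₀) := by
        rw [tendsto_nhdsWithin_iff]
        constructor
        · have := (hγcont.tendsto 0).mono_left (nhdsWithin_le_nhds (s := Set.Ioo (0:ℝ) 1))
          rwa [hγ0] at this
        · exact eventually_mem_nhdsWithin.mono fun s hs => hγmem s hs
      have ht0cl : t₀ ∈ closure (interior Dg) := by
        refine mem_closure_of_tendsto ((htendγ.mono_right nhdsWithin_le_nhds)) ?_
        exact eventually_mem_nhdsWithin.mono fun s hs => hγmem s hs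
      have ht0fr : t₀ ∈ frontier (interior Dg) := by
        constructor
        · exact ht0cl
        · rw [interior_interior]; exact ht0
      have htop : Filter.Tendsto (gr ∘ γ) (𝓝[Set.Ioo (0:ℝ) 1] (0:ℝ)) Filter.atTop :=
        (hA t₀ ht0fr).comp htendγ
      have hbig : ∀ᶠ s in 𝓝[Set.Ioo (0:ℝ) 1] (0:ℝ),
          |gr t₀| + |gr t₁| < gr (γ s) :=
        htop.eventually (Filter.eventually_gt_atTop _)
      obtain ⟨s, hsbig, hsmem⟩ := (hbig.and eventually_mem_nhdsWithin).exists
      have hbound : gr (γ s) ≤ (1 - s) * gr t₀ + s * gr t₁ := by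
        rw [hγcomb]
        exact hgconv.2 hxD (interior_subset ht₁) (by linarith [hsmem.2]) hsmem.1.le (by ring)
      have h1 : (1 - s) * gr t₀ + s * gr t₁ ≤ |gr t₀| + |gr t₁| := by
        have := le_abs_self (gr t₀); have := le_abs_self (gr t₁)
        have := abs_nonneg (gr t₀); have := abs_nonneg (gr t₁)
        have h01 : 0 < s ∧ s < 1 := ⟨hsmem.1, hsmem.2⟩
        nlinarith [h01.1, h01.2]
      linarith
    · rw [hDguniv, interior_univ]; trivial
  -- E x is constant on XStar
  obtain ⟨x₀, hx₀⟩ := hXStarNe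
  refine ⟨E.mulVec x₀, ?_⟩
  suffices h : ∀ x ∈ XStar, ∀ y ∈ XStar, E.mulVec x = E.mulVec y by
    intro xs hxs; exact h xs hxs x₀ hx₀
  intro x hx y hy
  by_contra hne
  have hxi := hint x hx
  have hyi := hint y hy
  rw [hXStar] at hx hy
  obtain ⟨hxX, hxD, hxmin⟩ := hx
  obtain ⟨hyX, hyD, hymin⟩ := hy
  have hFeq : F x = F y := le_antisymm (hxmin y hyX hyD) (hymin x hxX hxD)
  set z : Fin n → ℝ := (1/2 : ℝ) • x + (1/2 : ℝ) • y with hzdef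
  have hzX : z ∈ X := hXconv hxX hyX (by norm_num) (by norm_num) (by norm_num)
  have hmv : E.mulVec z = (1/2 : ℝ) • E.mulVec x + (1/2 : ℝ) • E.mulVec y := by
    rw [hzdef, Matrix.mulVec_add, Matrix.mulVec_smul, Matrix.mulVec_smul]
  have hzD : E.mulVec z ∈ Dg := by
    rw [hmv]
    have hci : Convex ℝ (interior Dg) := hDg.interior
    exact interior_subset (hci hxi hyi (by norm_num) (by norm_num) (by norm_num))
  have hgrlt : gr (E.mulVec z) < (1/2 : ℝ) * gr (E.mulVec x) + (1/2 : ℝ) * gr (E.mulVec y) := by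
    rw [hmv]
    exact hgs.2 hxi hyi hne (by norm_num) (by norm_num) (by norm_num)
  have habs : ∑ i ∈ S, |z i| ≤ (1/2 : ℝ) * (∑ i ∈ S, |x i|) + (1/2 : ℝ) * (∑ i ∈ S, |y i|) := by
    rw [Finset.mul_sum, Finset.mul_sum, ← Finset.sum_add_distrib]
    refine Finset.sum_le_sum fun i _ => ?_
    have hz : |z i| = |(1/2 : ℝ) * x i + (1/2 : ℝ) * y i| := by
      simp [hzdef, Pi.add_apply, Pi.smul_apply, smul_eq_mul]
    rw [hz]
    calc |(1/2 : ℝ) * x i + (1/2 : ℝ) * y i| ≤ |(1/2 : ℝ) * x i| + |(1/2 : ℝ) * y i| :=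
          abs_add_le _ _
      _ = (1/2 : ℝ) * |x i| + (1/2 : ℝ) * |y i| := by
          have hh : |(1/2 : ℝ)| = 1/2 := by norm_num
          rw [abs_mul, abs_mul, hh]
  have hFz : F z < F x := by
    have hFeq' : gr (E.mulVec x) + lam * ∑ i ∈ S, |x i|
        = gr (E.mulVec y) + lam * ∑ i ∈ S, |y i| := by
      rw [← hF x, ← hF y]; exact hFeq
    have h2 : lam * ∑ i ∈ S, |z i|
        ≤ 1/2 * (lam * ∑ i ∈ S, |x i|) + 1/2 * (lam * ∑ i ∈ S, |y i|) :=
      calc lam * ∑ i ∈ S, |z i|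
          ≤ lam * ((1/2 : ℝ) * (∑ i ∈ S, |x i|) + (1/2 : ℝ) * (∑ i ∈ S, |y i|)) :=
            mul_le_mul_of_nonneg_left habs hlam.le
        _ = 1/2 * (lam * ∑ i ∈ S, |x i|) + 1/2 * (lam * ∑ i ∈ S, |y i|) := by ring
    rw [hF z, hF x]
    linarith [hgrlt, hFeq', h2]
  have := hxmin z hzX hzD
  linarith
end

section
/- The differences between successive CCM iterates for f₁ vanish: ‖x^{r+1} − x^r‖ → 0 as r → ∞, where ‖·‖ is the Euclidean norm on ℝ^n. -/
open Filter Topology Matrix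

section Helpers

variable {m : ℕ} {gr : (Fin m → ℝ) → ℝ} {O : Set (Fin m → ℝ)}

private lemma vec_decomp (v : Fin m → ℝ) : v = ∑ i, v i • (Pi.single i (1:ℝ) : Fin m → ℝ) := by
  ext j
  simp [Finset.sum_apply, Pi.single_apply]

private lemma hessQF_eq (hO : IsOpen O) (hg : ContDiffOn ℝ 2 gr O) {t : Fin m → ℝ} (ht : t ∈ O)
    (v : Fin m → ℝ) : hessQF gr t v = fderiv ℝ (fderiv ℝ gr) t v v := by
  have hD1 : ContDiffOn ℝ 1 (fderiv ℝ gr) O := hg.fderiv_of_isOpen hO (by norm_num)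
  have hH : HasFDerivAt (fderiv ℝ gr) (fderiv ℝ (fderiv ℝ gr) t) t :=
    ((hD1.differentiableOn (by norm_num) t ht).differentiableAt (hO.mem_nhds ht)).hasFDerivAt
  have key : ∀ j i : Fin m,
      fderiv ℝ (fun s => gradv gr s j) t (Pi.single i 1)
        = fderiv ℝ (fderiv ℝ gr) t (Pi.single i 1) (Pi.single j 1) := by
    intro j i
    have h2 := (ContinuousLinearMap.apply ℝ ℝ (Pi.single j (1:ℝ) : Fin m → ℝ)).hasFDerivAt.comp t hH
    have : fderiv ℝ (fun s => gradv gr s j) t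
        = (ContinuousLinearMap.apply ℝ ℝ (Pi.single j (1:ℝ) : Fin m → ℝ)).comp
            (fderiv ℝ (fderiv ℝ gr) t) := by
      simpa [gradv, Function.comp_def] using h2.fderiv
    simp [this]
  calc hessQF gr t v
      = ∑ i, ∑ j, v i * fderiv ℝ (fderiv ℝ gr) t (Pi.single i 1) (Pi.single j 1) * v j := by
        unfold hessQF; congr 1; ext i; congr 1; ext j; rw [key]
    _ = fderiv ℝ (fderiv ℝ gr) t v v := by
        conv_rhs => rw [vec_decomp v]
        rw [map_sum]
        simp only [_root_.map_smul, ContinuousLinearMap.coe_sum', ContinuousLinearMap.coe_smul',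
          Finset.sum_apply, Pi.smul_apply, map_sum, smul_eq_mul]
        rw [Finset.sum_comm]
        apply Finset.sum_congr rfl; intro i _
        rw [Finset.mul_sum]
        apply Finset.sum_congr rfl; intro j _
        ring

private lemma hessQF_smul (t v : Fin m → ℝ) (c : ℝ) :
    hessQF gr t (c • v) = c^2 * hessQF gr t v := by
  simp only [hessQF, Pi.smul_apply, smul_eq_mul, Finset.mul_sum]
  apply Finset.sum_congr rfl; intro i _
  apply Finset.sum_congr rfl; intro j _
  ring

private lemma hessQF_zero (t : Fin m → ℝ) : hessQF gr t 0 = 0 := by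
  simp [hessQF]

private lemma strong_midpoint (hO : IsOpen O) (hg : ContDiffOn ℝ 2 gr O)
    {Q : Set (Fin m → ℝ)} (hQO : Q ⊆ O) (hQc : Convex ℝ Q)
    {σ : ℝ} (hσ : ∀ t ∈ Q, ∀ v : Fin m → ℝ, σ * (∑ i, v i ^ 2) ≤ hessQF gr t v)
    {u v : Fin m → ℝ} (hu : u ∈ Q) (hv : v ∈ Q) :
    gr ((1/2 : ℝ) • (u + v)) ≤ gr u / 2 + gr v / 2 - σ/8 * (∑ i, (v i - u i)^2) := by
  classical
  set w : Fin m → ℝ := v - u with hw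
  set c : ℝ := σ * (∑ i, w i ^ 2) with hc
  set L : ℝ → (Fin m → ℝ) := fun t => u + t • w with hL
  have hLcont : Continuous L := by continuity
  set O' : Set ℝ := L ⁻¹' O with hO'
  have hO'open : IsOpen O' := hO.preimage hLcont
  have hLQ : ∀ t ∈ Set.Icc (0:ℝ) 1, L t ∈ Q := by
    intro t ht
    have : L t = (1 - t) • u + t • v := by
      simp only [hL, hw]
      module
    rw [this]
    exact hQc hu hv (by linarith [ht.2]) ht.1 (by ring)
  have hIccO' : Set.Icc (0:ℝ) 1 ⊆ O' := fun t ht => hQO (hLQ t ht)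
  have hD1 : ContDiffOn ℝ 1 (fderiv ℝ gr) O := hg.fderiv_of_isOpen hO (by norm_num)
  have hgrdiff : ∀ s ∈ O, HasFDerivAt gr (fderiv ℝ gr s) s := by
    intro s hs
    exact ((hg.differentiableOn (by norm_num) s hs).differentiableAt (hO.mem_nhds hs)).hasFDerivAt
  have hHdiff : ∀ s ∈ O, HasFDerivAt (fderiv ℝ gr) (fderiv ℝ (fderiv ℝ gr) s) s := by
    intro s hs
    exact ((hD1.differentiableOn (by norm_num) s hs).differentiableAt (hO.mem_nhds hs)).hasFDerivAt
  have hLderiv : ∀ t : ℝ, HasDerivAt L w t := by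
    intro t
    simpa [hL] using ((hasDerivAt_id t).smul_const w).const_add u
  set φ : ℝ → ℝ := fun t => gr (L t) with hφ
  set ψ : ℝ → ℝ := fun t => fderiv ℝ gr (L t) w with hψ
  have hφ' : ∀ t ∈ O', HasDerivAt φ (ψ t) t := by
    intro t ht
    exact (hgrdiff (L t) ht).comp_hasDerivAt t (hLderiv t)
  have hψ' : ∀ t ∈ O', HasDerivAt ψ (fderiv ℝ (fderiv ℝ gr) (L t) w w) t := by
    intro t ht
    have h1 : HasFDerivAt (fun s => fderiv ℝ gr s w)
        ((ContinuousLinearMap.apply ℝ ℝ w).comp (fderiv ℝ (fderiv ℝ gr) (L t))) (L t) :=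
      (ContinuousLinearMap.apply ℝ ℝ w).hasFDerivAt.comp (L t) (hHdiff (L t) ht)
    have := h1.comp_hasDerivAt t (hLderiv t)
    exact this
  set χ : ℝ → ℝ := fun t => φ t - c/2 * t^2 with hχ
  have hχ' : ∀ t ∈ O', HasDerivAt χ (ψ t - c * t) t := by
    intro t ht
    have hq : HasDerivAt (fun t : ℝ => c/2 * t^2) (c * t) t := by
      have := (hasDerivAt_pow 2 t).const_mul (c/2)
      simpa using this.congr_deriv (by ring)
    exact (hφ' t ht).sub hq
  have hχconv : ConvexOn ℝ (Set.Icc (0:ℝ) 1) χ := by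
    apply convexOn_of_deriv2_nonneg (convex_Icc 0 1)
    · intro t ht
      exact ((hχ' t (hIccO' ht)).continuousAt).continuousWithinAt
    · intro t ht
      rw [interior_Icc] at ht
      exact ((hχ' t (hIccO' (Set.mem_Icc_of_Ioo ht))).differentiableAt).differentiableWithinAt
    · intro t ht
      rw [interior_Icc] at ht
      have htO' : t ∈ O' := hIccO' (Set.mem_Icc_of_Ioo ht)
      have hEq : deriv χ =ᶠ[nhds t] fun s => ψ s - c * s := by
        filter_upwards [hO'open.mem_nhds htO'] with s hs
        exact (hχ' s hs).deriv
      have hdiff : DifferentiableAt ℝ (fun s => ψ s - c * s) t :=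
        ((hψ' t htO').differentiableAt).sub ((differentiableAt_id.const_mul c))
      exact (hEq.differentiableAt_iff.mpr hdiff).differentiableWithinAt
    · intro t ht
      rw [interior_Icc] at ht
      have htO' : t ∈ O' := hIccO' (Set.mem_Icc_of_Ioo ht)
      have hEq : deriv χ =ᶠ[nhds t] fun s => ψ s - c * s := by
        filter_upwards [hO'open.mem_nhds htO'] with s hs
        exact (hχ' s hs).deriv
      have hs : HasDerivAt (fun s => ψ s - c * s) (fderiv ℝ (fderiv ℝ gr) (L t) w w - c) t := by
        exact ((hψ' t htO').sub ((hasDerivAt_id t).const_mul c)).congr_deriv (by simp)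
      have h2 : deriv (deriv χ) t = fderiv ℝ (fderiv ℝ gr) (L t) w w - c := by
        rw [hEq.deriv_eq]; exact hs.deriv
      have hQmem : L t ∈ Q := hLQ t (Set.mem_Icc_of_Ioo ht)
      have := hσ (L t) hQmem w
      rw [hessQF_eq hO hg (hQO hQmem) w] at this
      simp only [Function.iterate_succ, Function.iterate_zero, Function.comp_apply, id_eq]
      rw [h2]
      linarith
  have hkey := hχconv.2 (Set.left_mem_Icc.mpr zero_le_one) (Set.right_mem_Icc.mpr zero_le_one)
      (by norm_num : (0:ℝ) ≤ 1/2) (by norm_num : (0:ℝ) ≤ 1/2) (by norm_num)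
  have hmid : (1/2 : ℝ) • (0:ℝ) + (1/2 : ℝ) • (1:ℝ) = 1/2 := by norm_num
  rw [hmid] at hkey
  have hφ0 : φ 0 = gr u := by simp [hφ, hL]
  have hφ1 : φ 1 = gr v := by simp [hφ, hL, hw]
  have hφh : φ (1/2) = gr ((1/2 : ℝ) • (u + v)) := by
    have : L (1/2) = (1/2 : ℝ) • (u + v) := by
      simp only [hL, hw]; module
    simp only [hφ]; rw [this]
  have hwsum : (∑ i, w i ^ 2) = ∑ i, (v i - u i)^2 := by
    apply Finset.sum_congr rfl; intro i _; simp [hw]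
  simp only [hχ, smul_eq_mul] at hkey
  rw [hφ0, hφ1, hφh] at hkey
  rw [← hwsum]
  rw [hc] at hkey
  nlinarith [hkey]

private lemma exists_strong_const (hm : 0 < m) (hO : IsOpen O) (hg : ContDiffOn ℝ 2 gr O)
    (hhess : ∀ t ∈ O, ∀ v : Fin m → ℝ, v ≠ 0 → 0 < hessQF gr t v)
    {Q : Set (Fin m → ℝ)} (hQO : Q ⊆ O) (hQcomp : IsCompact Q) (hQne : Q.Nonempty) :
    ∃ σ > 0, ∀ t ∈ Q, ∀ v : Fin m → ℝ, σ * (∑ i, v i ^ 2) ≤ hessQF gr t v := by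
  classical
  set sph : Set (Fin m → ℝ) := {v | (∑ i, v i ^ 2) = 1} with hsph
  have hsphclosed : IsClosed sph := by
    have : Continuous fun v : Fin m → ℝ => ∑ i, v i ^ 2 := by continuity
    exact isClosed_eq this continuous_const
  have hsphbdd : sph ⊆ Metric.closedBall 0 1 := by
    intro v hv
    simp only [Metric.mem_closedBall, dist_zero_right]
    rw [pi_norm_le_iff_of_nonneg zero_le_one]
    intro i
    rw [Real.norm_eq_abs, ← sq_le_one_iff_abs_le_one]
    calc v i ^ 2 ≤ ∑ k, v k ^ 2 :=
          Finset.single_le_sum (fun k _ => sq_nonneg (v k)) (Finset.mem_univ i)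
      _ = 1 := hv
  have hsphcomp : IsCompact sph :=
    Metric.isCompact_of_isClosed_isBounded hsphclosed
      ((Metric.isBounded_closedBall).subset hsphbdd)
  have hsphne : sph.Nonempty := by
    refine ⟨Pi.single ⟨0, hm⟩ 1, ?_⟩
    simp only [hsph, Set.mem_setOf_eq, Pi.single_apply]
    rw [Finset.sum_eq_single ⟨0, hm⟩] <;> simp
  have hD1 : ContDiffOn ℝ 1 (fderiv ℝ gr) O := hg.fderiv_of_isOpen hO (by norm_num)
  have hHcont : ContinuousOn (fderiv ℝ (fderiv ℝ gr)) O :=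
    hD1.continuousOn_fderiv_of_isOpen hO le_rfl
  have h1 : ContinuousOn (fun p : (Fin m → ℝ) × (Fin m → ℝ) => fderiv ℝ (fderiv ℝ gr) p.1)
      (Q ×ˢ sph) := hHcont.comp continuousOn_fst (fun p hp => hQO hp.1)
  have h2 : ContinuousOn (fun p : (Fin m → ℝ) × (Fin m → ℝ) => fderiv ℝ (fderiv ℝ gr) p.1 p.2)
      (Q ×ˢ sph) :=
    isBoundedBilinearMap_apply.continuous.comp_continuousOn (h1.prodMk continuousOn_snd)
  have h3 : ContinuousOn (fun p : (Fin m → ℝ) × (Fin m → ℝ) => fderiv ℝ (fderiv ℝ gr) p.1 p.2 p.2)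
      (Q ×ˢ sph) :=
    isBoundedBilinearMap_apply.continuous.comp_continuousOn (h2.prodMk continuousOn_snd)
  have hΦcont : ContinuousOn (fun p : (Fin m → ℝ) × (Fin m → ℝ) => hessQF gr p.1 p.2)
      (Q ×ˢ sph) := by
    apply h3.congr
    intro p hp
    exact hessQF_eq hO hg (hQO hp.1) p.2
  obtain ⟨p0, hp0mem, hp0min⟩ := (hQcomp.prod hsphcomp).exists_isMinOn
    (hQne.prod hsphne) hΦcont
  have hp0Q : p0.1 ∈ Q := hp0mem.1
  have hp0sph : p0.2 ∈ sph := hp0mem.2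
  set σ := hessQF gr p0.1 p0.2 with hσdef
  have hσpos : 0 < σ := by
    apply hhess p0.1 (hQO hp0Q)
    intro h0
    rw [h0] at hp0sph
    simp [hsph] at hp0sph
  refine ⟨σ, hσpos, ?_⟩
  intro t ht v
  by_cases hv : v = 0
  · simp [hv, hessQF_zero]
  · have hspos : 0 < ∑ i, v i ^ 2 := by
      obtain ⟨i, hi⟩ := Function.ne_iff.mp hv
      exact Finset.sum_pos' (fun k _ => sq_nonneg _)
        ⟨i, Finset.mem_univ i, pow_two_pos_of_ne_zero hi⟩
    set s := Real.sqrt (∑ i, v i ^ 2) with hs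
    have hspos' : 0 < s := Real.sqrt_pos.mpr hspos
    have hsq : s ^ 2 = ∑ i, v i ^ 2 := Real.sq_sqrt hspos.le
    have hwsph : s⁻¹ • v ∈ sph := by
      simp only [hsph, Set.mem_setOf_eq, Pi.smul_apply, smul_eq_mul]
      have : ∀ i, (s⁻¹ * v i) ^ 2 = s⁻¹ ^ 2 * v i ^ 2 := fun i => by ring
      rw [Finset.sum_congr rfl (fun i _ => this i), ← Finset.mul_sum, ← hsq]
      field_simp
    have h5 : σ ≤ hessQF gr t (s⁻¹ • v) := hp0min (Set.mk_mem_prod ht hwsph)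
    rw [hessQF_smul] at h5
    have h4 : σ * s^2 ≤ hessQF gr t v := by
      have hss : (0:ℝ) < s^2 := by positivity
      calc σ * s^2 ≤ (s⁻¹^2 * hessQF gr t v) * s^2 := by nlinarith [h5, hss]
        _ = hessQF gr t v := by field_simp
    rw [hsq] at h4
    exact h4

private lemma sumSq_smul (c : ℝ) (w : Fin m → ℝ) :
    (∑ i, ((c • w) i) ^ 2) = c^2 * ∑ i, (w i)^2 := by
  rw [Finset.mul_sum]
  apply Finset.sum_congr rfl; intro i _
  simp [mul_pow]

private lemma convexOn_sumSq (c : Fin m → ℝ) :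
    ConvexOn ℝ Set.univ (fun u : Fin m → ℝ => ∑ i, (u i - c i)^2) := by
  constructor
  · exact convex_univ
  · intro p _ q _ a b ha hb hab
    simp only [smul_eq_mul, Finset.mul_sum, ← Finset.sum_add_distrib]
    apply Finset.sum_le_sum
    intro i _
    simp only [Pi.add_apply, Pi.smul_apply, smul_eq_mul]
    have hb' : b = 1 - a := by linarith
    have key : a * (p i - c i)^2 + b * (q i - c i)^2 - (a*p i + b*q i - c i)^2
        = a*b*(p i - q i)^2 := by rw [hb']; ring
    nlinarith [mul_nonneg (mul_nonneg ha hb) (sq_nonneg (p i - q i)), key]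

private lemma isCompact_sumSq_ball (c : Fin m → ℝ) (R : ℝ) :
    IsCompact {u : Fin m → ℝ | (∑ i, (u i - c i)^2) ≤ R^2} := by
  have hclosed : IsClosed {u : Fin m → ℝ | (∑ i, (u i - c i)^2) ≤ R^2} := by
    have hcont : Continuous fun u : Fin m → ℝ => ∑ i, (u i - c i)^2 := by continuity
    exact isClosed_le hcont continuous_const
  apply Metric.isCompact_of_isClosed_isBounded hclosed
  apply Metric.isBounded_closedBall (x := c) (r := |R|) |>.subset
  intro u hu
  simp only [Set.mem_setOf_eq] at hu
  simp only [Metric.mem_closedBall]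
  rw [dist_eq_norm]
  rw [pi_norm_le_iff_of_nonneg (abs_nonneg R)]
  intro i
  rw [Real.norm_eq_abs]
  have h1 : (u i - c i)^2 ≤ R^2 := by
    calc (u i - c i)^2 ≤ ∑ k, (u k - c k)^2 :=
          Finset.single_le_sum (f := fun k => (u k - c k)^2) (fun k _ => sq_nonneg _)
            (Finset.mem_univ i)
      _ ≤ R^2 := hu
  calc |u i - c i| = Real.sqrt ((u i - c i)^2) := (Real.sqrt_sq_eq_abs _).symm
    _ ≤ Real.sqrt (R^2) := Real.sqrt_le_sqrt h1
    _ = |R| := Real.sqrt_sq_eq_abs R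

private lemma dist_le_of_sumSq_le {u c : Fin m → ℝ} {r : ℝ} (hr : 0 ≤ r)
    (h : (∑ i, (u i - c i)^2) ≤ r^2) : dist u c ≤ r := by
  rw [dist_eq_norm, pi_norm_le_iff_of_nonneg hr]
  intro i
  rw [Real.norm_eq_abs]
  have h1 : (u i - c i)^2 ≤ r^2 := by
    calc (u i - c i)^2 ≤ ∑ k, (u k - c k)^2 :=
          Finset.single_le_sum (f := fun k => (u k - c k)^2) (fun k _ => sq_nonneg _)
            (Finset.mem_univ i)
      _ ≤ r^2 := h
  calc |u i - c i| = Real.sqrt ((u i - c i)^2) := (Real.sqrt_sq_eq_abs _).symm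
    _ ≤ Real.sqrt (r^2) := Real.sqrt_le_sqrt h1
    _ = r := Real.sqrt_sq hr
  
end Helpers

set_option maxHeartbeats 1000000 in
/-- Successive CCM iterates for `f₁` get arbitrarily close: `‖x^{r+1} − x^r‖ → 0`. -/
theorem ccm_f1_successive_differences_vanish
(m n : ℕ) (hm : 0 < m) (hn : 0 < n)
    (S : Finset (Fin n)) (lam : ℝ) (hlam : 0 < lam)
    (E : Matrix (Fin m) (Fin n) ℝ) (hE : ∀ j, ∃ i, E i j ≠ 0)
    (Dg : Set (Fin m → ℝ)) (gr : (Fin m → ℝ) → ℝ)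
    (hDg : Convex ℝ Dg) (hgconv : ConvexOn ℝ Dg gr)
    (hCg : (interior Dg).Nonempty)
    (hgs : StrictConvexOn ℝ (interior Dg) gr)
    (hgC2 : ContDiffOn ℝ 2 gr (interior Dg))
    (hhess : ∀ t ∈ interior Dg, ∀ v : Fin m → ℝ, v ≠ 0 → 0 < hessQF gr t v)
    (hA3 : (∀ t₀ ∈ frontier (interior Dg),
              Filter.Tendsto gr (nhdsWithin t₀ (interior Dg)) Filter.atTop)
           ∨ (S = Finset.univ ∧ (∀ t, 0 ≤ gr t) ∧ Dg = Set.univ))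
    (X : Set (Fin n → ℝ)) (hX : X = {x | ∀ i ∉ S, 0 ≤ x i})
    (F : (Fin n → ℝ) → ℝ)
    (hF : ∀ x, F x = gr (E.mulVec x) + lam * ∑ i ∈ S, |x i|)
    (XStar : Set (Fin n → ℝ))
    (hXStar : XStar = {x | x ∈ X ∧ E.mulVec x ∈ Dg ∧
                ∀ y ∈ X, E.mulVec y ∈ Dg → F x ≤ F y})
    (hXStarNe : XStar.Nonempty)
(x : ℕ → Fin n → ℝ) (xi : ℕ → ℕ → Fin n → ℝ)
    (hx0 : x 0 ∈ X) (hx0fin : E.mulVec (x 0) ∈ Dg)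
    (hxi0 : ∀ r, xi r 0 = x r)
    (hstep : ∀ r, ∀ i : Fin n,
        xi r ((i : ℕ) + 1) ∈ X ∧ E.mulVec (xi r ((i : ℕ) + 1)) ∈ Dg ∧
        (∀ j, j ≠ i → xi r ((i : ℕ) + 1) j = xi r (i : ℕ) j) ∧
        (∀ y ∈ X, (∀ j, j ≠ i → y j = xi r (i : ℕ) j) →
            E.mulVec y ∈ Dg → F (xi r ((i : ℕ) + 1)) ≤ F y))
    (hxsucc : ∀ r, x (r + 1) = xi r n) :
    Filter.Tendsto (fun r => _root_.enorm (x (r + 1) - x r)) Filter.atTop (nhds 0) := by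
  classical
  obtain ⟨xs, hxs'⟩ := hXStarNe
  rw [hXStar] at hxs'
  obtain ⟨hxsX, hxsDg, hxsmin⟩ := hxs'
  set O : Set (Fin m → ℝ) := interior Dg with hOdef
  have hO : IsOpen O := isOpen_interior
  have hOD : O ⊆ Dg := interior_subset
  have hOint : interior O = O := by rw [hOdef]; exact interior_interior
  set L0 : ℝ := F (x 0) with hL0
  set Fstar : ℝ := F xs with hFstardef
  have hXconv : Convex ℝ X := by
    rw [hX]
    intro p hp q hq a b ha hb hab i hi
    have h1 := hp i hi
    have h2 := hq i hi
    simp only [Pi.add_apply, Pi.smul_apply, smul_eq_mul]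
    have := add_nonneg (mul_nonneg ha h1) (mul_nonneg hb h2)
    exact this
  have hpen_nonneg : ∀ y : Fin n → ℝ, 0 ≤ ∑ i ∈ S, |y i| :=
    fun y => Finset.sum_nonneg fun i _ => abs_nonneg _
  have hgF : ∀ y, gr (E.mulVec y) ≤ F y := by
    intro y
    rw [hF]
    nlinarith [hpen_nonneg y, hlam.le, mul_nonneg hlam.le (hpen_nonneg y)]
  have hpencombo : ∀ (p q : Fin n → ℝ) (a b : ℝ), 0 ≤ a → 0 ≤ b →
      (∑ i ∈ S, |(a • p + b • q) i|) ≤ a * (∑ i ∈ S, |p i|) + b * (∑ i ∈ S, |q i|) := by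
    intro p q a b ha hb
    rw [Finset.mul_sum, Finset.mul_sum, ← Finset.sum_add_distrib]
    apply Finset.sum_le_sum
    intro i _
    simp only [Pi.add_apply, Pi.smul_apply, smul_eq_mul]
    calc |a * p i + b * q i| ≤ |a * p i| + |b * q i| := abs_add_le _ _
      _ = a * |p i| + b * |q i| := by
          rw [abs_mul, abs_mul, abs_of_nonneg ha, abs_of_nonneg hb]
  have hFcombo : ∀ (p q : Fin n → ℝ) (a b : ℝ), 0 ≤ a → 0 ≤ b → a + b = 1 →
      E.mulVec p ∈ Dg → E.mulVec q ∈ Dg →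
      F (a • p + b • q) ≤ a * F p + b * F q := by
    intro p q a b ha hb hab hp hq
    have hmv : E.mulVec (a • p + b • q) = a • E.mulVec p + b • E.mulVec q := by
      rw [Matrix.mulVec_add, Matrix.mulVec_smul, Matrix.mulVec_smul]
    rw [hF, hF, hF, hmv]
    have h1 := hgconv.2 hp hq ha hb hab
    simp only [smul_eq_mul] at h1
    have h2 := hpencombo p q a b ha hb
    have h3 := mul_le_mul_of_nonneg_left h2 hlam.le
    nlinarith [h1, h3]
  -- Branch consequences of assumption A3
  have hbranch : Dg ⊆ O ∧ ∀ (z : Fin m → ℝ) (W : Set (Fin m → ℝ)),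
      W ⊆ {u | u ∈ O ∧ gr u ≤ L0} → z ∈ closure W → z ∈ O := by
    rcases hA3 with hA | ⟨_, _, hDguniv⟩
    · constructor
      · intro t0 ht0
        by_contra hnot
        obtain ⟨cpt, hcpt⟩ := hCg
        set z : ℕ → Fin m → ℝ :=
          fun k => ((k:ℝ)+2)⁻¹ • cpt + (1 - ((k:ℝ)+2)⁻¹) • t0 with hz
        have hθpos : ∀ k : ℕ, (0:ℝ) < ((k:ℝ)+2)⁻¹ := by intro k; positivity
        have hθle : ∀ k : ℕ, ((k:ℝ)+2)⁻¹ ≤ 1 := by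
          intro k
          rw [inv_le_one_iff₀]
          right
          have : (0:ℝ) ≤ (k:ℝ) := Nat.cast_nonneg k
          linarith
        have hcpt' : cpt ∈ interior Dg := hcpt
        have hzmem : ∀ k, z k ∈ O := by
          intro k
          have hbk : (0:ℝ) ≤ 1 - ((k:ℝ)+2)⁻¹ := by linarith [hθle k]
          have habk : ((k:ℝ)+2)⁻¹ + (1 - ((k:ℝ)+2)⁻¹) = 1 := by ring
          exact hDg.combo_interior_closure_mem_interior hcpt' (subset_closure ht0)
            (hθpos k) hbk habk
        have hztend : Tendsto z atTop (nhds t0) := by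
          have h1 : Tendsto (fun k : ℕ => ((k:ℝ)+2)⁻¹) atTop (nhds 0) := by
            apply Tendsto.inv_tendsto_atTop
            apply tendsto_atTop_add_const_right
            exact tendsto_natCast_atTop_atTop
          have h2 : ∀ k, z k = t0 + ((k:ℝ)+2)⁻¹ • (cpt - t0) := by
            intro k; simp only [hz]; module
          rw [funext h2]
          have h3 : Tendsto (fun k : ℕ => ((k:ℝ)+2)⁻¹ • (cpt - t0)) atTop
              (nhds ((0:ℝ) • (cpt - t0))) := h1.smul_const (cpt - t0)
          rw [zero_smul] at h3
          simpa using h3.const_add t0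
        have ht0cl : t0 ∈ closure O :=
          mem_closure_of_tendsto hztend (Filter.Eventually.of_forall hzmem)
        have hfr : t0 ∈ frontier O := ⟨ht0cl, fun h => hnot (hOint ▸ h)⟩
        have htd := hA t0 hfr
        have hzt : Tendsto z atTop (nhdsWithin t0 O) :=
          tendsto_nhdsWithin_iff.mpr ⟨hztend, Filter.Eventually.of_forall hzmem⟩
        obtain ⟨k, hk⟩ := ((htd.comp hzt).eventually_gt_atTop (max (gr cpt) (gr t0))).exists
        have hle : gr (z k) ≤ max (gr cpt) (gr t0) := by
          have hbk : (0:ℝ) ≤ 1 - ((k:ℝ)+2)⁻¹ := by linarith [hθle k]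
          have habk : ((k:ℝ)+2)⁻¹ + (1 - ((k:ℝ)+2)⁻¹) = 1 := by ring
          have h3 := hgconv.2 (hOD hcpt) ht0 (hθpos k).le hbk habk
          simp only [smul_eq_mul] at h3
          have hc1 : gr cpt ≤ max (gr cpt) (gr t0) := le_max_left _ _
          have hc2 : gr t0 ≤ max (gr cpt) (gr t0) := le_max_right _ _
          have hθ1 := hθpos k
          have hθ2 := hθle k
          nlinarith [h3]
        exact absurd hk (not_lt.mpr hle)
      · intro z W hW hcl
        by_contra hz
        have hzcl : z ∈ closure O := closure_mono (fun u hu => (hW hu).1) hcl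
        have hfr : z ∈ frontier O := ⟨hzcl, fun h => hz (hOint ▸ h)⟩
        have htd := hA z hfr
        obtain ⟨seq, hseqmem, hseqt⟩ := mem_closure_iff_seq_limit.mp hcl
        have hzt : Tendsto seq atTop (nhdsWithin z O) :=
          tendsto_nhdsWithin_iff.mpr
            ⟨hseqt, Filter.Eventually.of_forall (fun k => (hW (hseqmem k)).1)⟩
        obtain ⟨k, hk⟩ := ((htd.comp hzt).eventually_gt_atTop L0).exists
        exact absurd hk (not_lt.mpr (hW (hseqmem k)).2)
    · have hOuniv : O = Set.univ := by rw [hOdef, hDguniv, interior_univ]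
      constructor
      · rw [hOuniv]; exact fun _ _ => trivial
      · intro z W _ _; rw [hOuniv]; trivial
  obtain ⟨hDgO, hclosO⟩ := hbranch
  -- trajectory invariants
  have hstep' : ∀ r k, k < n → xi r k ∈ X → E.mulVec (xi r k) ∈ Dg →
      (xi r (k+1) ∈ X ∧ E.mulVec (xi r (k+1)) ∈ Dg ∧ F (xi r (k+1)) ≤ F (xi r k)) := by
    intro r k hk hX1 hDg1
    obtain ⟨h1, h2, h3, h4⟩ := hstep r ⟨k, hk⟩
    exact ⟨h1, h2, h4 (xi r k) hX1 (fun j _ => rfl) hDg1⟩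
  have hseg : ∀ r, x r ∈ X → E.mulVec (x r) ∈ Dg → ∀ k, k ≤ n →
      xi r k ∈ X ∧ E.mulVec (xi r k) ∈ Dg ∧ F (xi r k) ≤ F (x r) := by
    intro r hXr hDgr k
    induction k with
    | zero => intro _; rw [hxi0]; exact ⟨hXr, hDgr, le_rfl⟩
    | succ k ih =>
      intro hk
      have hk' : k < n := Nat.lt_of_succ_le hk
      obtain ⟨e1, e2, e3⟩ := ih hk'.le
      obtain ⟨f1, f2, f3⟩ := hstep' r k hk' e1 e2
      exact ⟨f1, f2, f3.trans e3⟩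
  have hxmem : ∀ r, x r ∈ X ∧ E.mulVec (x r) ∈ Dg ∧ F (x r) ≤ L0 := by
    intro r
    induction r with
    | zero => exact ⟨hx0, hx0fin, le_rfl⟩
    | succ r ih =>
      obtain ⟨e1, e2, e3⟩ := hseg r ih.1 ih.2.1 n le_rfl
      rw [hxsucc r]
      exact ⟨e1, e2, e3.trans ih.2.2⟩
  have htraj : ∀ r k, k ≤ n → xi r k ∈ X ∧ E.mulVec (xi r k) ∈ Dg ∧ F (xi r k) ≤ L0 := by
    intro r k hk
    obtain ⟨e1, e2, e3⟩ := hseg r (hxmem r).1 (hxmem r).2.1 k hk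
    exact ⟨e1, e2, e3.trans (hxmem r).2.2⟩
  have hFstarle : ∀ y ∈ X, E.mulVec y ∈ Dg → Fstar ≤ F y := fun y hy hdg => hxsmin y hy hdg
  have hF0 : Fstar ≤ L0 := hFstarle _ hx0 hx0fin
  -- boundedness of the image trajectory
  set ustar := E.mulVec xs with hustar
  obtain ⟨ε, hεpos, hball⟩ := Metric.isOpen_iff.mp hO ustar (hDgO hxsDg)
  set Q1 := {u : Fin m → ℝ | (∑ i, (u i - ustar i)^2) ≤ (ε/2)^2} with hQ1
  have hQ1O : Q1 ⊆ O := by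
    intro u hu
    apply hball
    rw [Metric.mem_ball]
    calc dist u ustar ≤ ε/2 := dist_le_of_sumSq_le (by positivity) hu
      _ < ε := by linarith
  have hQ1conv : Convex ℝ Q1 := by
    have := (convexOn_sumSq ustar).convex_le ((ε/2)^2)
    simpa [hQ1] using this
  have hQ1comp : IsCompact Q1 := isCompact_sumSq_ball ustar (ε/2)
  have hustarQ1 : ustar ∈ Q1 := by
    show (∑ i, (ustar i - ustar i)^2) ≤ (ε/2)^2
    have hz : (∑ i, (ustar i - ustar i)^2) = 0 :=
      Finset.sum_eq_zero (fun i _ => by ring)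
    rw [hz]
    positivity
  obtain ⟨σ1, hσ1pos, hσ1⟩ := exists_strong_const hm hO hgC2 hhess hQ1O hQ1comp ⟨ustar, hustarQ1⟩
  set R := max (ε/2) ((ε/2) * (16 * (L0 - Fstar + 1)) / (σ1 * ε^2)) with hR
  have hRpos : 0 < R := lt_of_lt_of_le (by positivity) (le_max_left _ _)
  have hbound : ∀ (p : Fin n → ℝ), p ∈ X → E.mulVec p ∈ Dg → F p ≤ L0 →
      (∑ i, (E.mulVec p i - ustar i)^2) ≤ R^2 := by
    intro p hpX hpDg hpF
    by_contra hcon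
    push_neg at hcon
    have hsumnn : 0 ≤ ∑ i, (E.mulVec p i - ustar i)^2 :=
      Finset.sum_nonneg fun i _ => sq_nonneg _
    set s := Real.sqrt (∑ i, (E.mulVec p i - ustar i)^2) with hs
    have hsq : s^2 = ∑ i, (E.mulVec p i - ustar i)^2 := Real.sq_sqrt hsumnn
    have hsR : R < s := by
      have h1 : Real.sqrt (R^2) < Real.sqrt (∑ i, (E.mulVec p i - ustar i)^2) :=
        Real.sqrt_lt_sqrt (by positivity) hcon
      rwa [Real.sqrt_sq hRpos.le] at h1
    have hspos : 0 < s := hRpos.trans hsR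
    set θ := (ε/2) / s with hθ
    have hθpos : 0 < θ := by positivity
    have hθlt : θ < 1 := by
      rw [div_lt_one hspos]
      calc ε/2 ≤ R := le_max_left _ _
        _ < s := hsR
    set pb := (1 - θ) • xs + θ • p with hpb
    have hpbX : pb ∈ X := hXconv hxsX hpX (by linarith) hθpos.le (by ring)
    have hmvb : E.mulVec pb = (1 - θ) • ustar + θ • E.mulVec p := by
      rw [hpb, Matrix.mulVec_add, Matrix.mulVec_smul, Matrix.mulVec_smul]
    have hsumb : (∑ i, (E.mulVec pb i - ustar i)^2) = (ε/2)^2 := by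
      have hptw : ∀ i, E.mulVec pb i - ustar i = θ * (E.mulVec p i - ustar i) := by
        intro i
        rw [hmvb]
        simp only [Pi.add_apply, Pi.smul_apply, smul_eq_mul]
        ring
      calc (∑ i, (E.mulVec pb i - ustar i)^2)
          = ∑ i, θ^2 * (E.mulVec p i - ustar i)^2 := by
            apply Finset.sum_congr rfl; intro i _; rw [hptw i]; ring
        _ = θ^2 * ∑ i, (E.mulVec p i - ustar i)^2 := by rw [Finset.mul_sum]
        _ = (ε/2)^2 := by
            rw [← hsq, hθ, div_pow, div_mul_cancel₀ _ (pow_ne_zero 2 hspos.ne')]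
    have hpbQ1 : E.mulVec pb ∈ Q1 := le_of_eq hsumb
    have hpbDg : E.mulVec pb ∈ Dg := hOD (hQ1O hpbQ1)
    have hFb : F pb ≤ (1-θ) * Fstar + θ * F p :=
      hFcombo xs p (1-θ) θ (by linarith) hθpos.le (by ring) hxsDg hpDg
    set pa := (1/2 : ℝ) • xs + (1/2 : ℝ) • pb with hpa
    have hpaX : pa ∈ X := hXconv hxsX hpbX (by norm_num) (by norm_num) (by norm_num)
    have hmva : E.mulVec pa = (1/2 : ℝ) • ustar + (1/2 : ℝ) • E.mulVec pb := by
      rw [hpa, Matrix.mulVec_add, Matrix.mulVec_smul, Matrix.mulVec_smul]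
    have hpaQ1 : E.mulVec pa ∈ Q1 := by
      rw [hmva]
      exact hQ1conv hustarQ1 hpbQ1 (by norm_num) (by norm_num) (by norm_num)
    have hpaDg : E.mulVec pa ∈ Dg := hOD (hQ1O hpaQ1)
    have hgmid := strong_midpoint hO hgC2 hQ1O hQ1conv hσ1 hustarQ1 hpbQ1
    rw [hsumb] at hgmid
    have hpenmid := hpencombo xs pb (1/2) (1/2) (by norm_num) (by norm_num)
    have hFa : F pa ≤ Fstar/2 + F pb / 2 - σ1/8 * (ε/2)^2 := by
      rw [hF pa]
      have hmva2 : E.mulVec pa = (1/2 : ℝ) • (ustar + E.mulVec pb) := by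
        rw [hmva, smul_add]
      rw [hmva2]
      have h5 := mul_le_mul_of_nonneg_left hpenmid hlam.le
      have hgr1 : gr ustar = Fstar - lam * ∑ i ∈ S, |xs i| := by
        rw [hFstardef, hF xs]; ring
      have hgr2 : gr (E.mulVec pb) = F pb - lam * ∑ i ∈ S, |pb i| := by
        rw [hF pb]; ring
      rw [hgr1, hgr2] at hgmid
      nlinarith [hgmid, h5]
    have hFalow : Fstar ≤ F pa := hFstarle pa hpaX hpaDg
    have hθsmall : θ * (L0 - Fstar) < σ1 * ε^2/16 := by
      have h2 : θ ≤ (ε/2)/R := by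
        rw [hθ]
        apply div_le_div_of_nonneg_left (by positivity) hRpos hsR.le
      have h3 : (ε/2) * (16 * (L0 - Fstar + 1)) / (σ1 * ε^2) ≤ R := le_max_right _ _
      have hσε : 0 < σ1 * ε^2 := by positivity
      have hLF : (0:ℝ) < 16 * (L0 - Fstar + 1) := by linarith
      have h4 : (ε/2) * (16 * (L0 - Fstar + 1)) / (σ1 * ε^2) > 0 :=
        div_pos (mul_pos (by positivity) hLF) hσε
      have h5 : θ ≤ (ε/2) / ((ε/2) * (16 * (L0 - Fstar + 1)) / (σ1 * ε^2)) := by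
        apply h2.trans
        apply div_le_div_of_nonneg_left (by positivity) h4 h3
      have h6 : (ε/2) / ((ε/2) * (16 * (L0 - Fstar + 1)) / (σ1 * ε^2))
          = (σ1 * ε^2) / (16 * (L0 - Fstar + 1)) := by
        rw [div_div_eq_mul_div, mul_div_mul_left _ _ (ne_of_gt (by positivity : (0:ℝ) < ε/2))]
      rw [h6] at h5
      have h7 : 0 < 16 * (L0 - Fstar + 1) := by linarith
      calc θ * (L0 - Fstar) ≤ (σ1 * ε^2) / (16 * (L0 - Fstar + 1)) * (L0 - Fstar) := by
            apply mul_le_mul_of_nonneg_right h5 (by linarith)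
        _ < σ1 * ε^2/16 := by
            rw [div_mul_eq_mul_div, div_lt_div_iff₀ h7 (by norm_num : (0:ℝ) < 16)]
            nlinarith [hσε]
    have hFphi : θ * F p ≤ θ * L0 := mul_le_mul_of_nonneg_left hpF hθpos.le
    have hsq2 : σ1/8*(ε/2)^2 = σ1*ε^2/32 := by ring
    linarith [hFa, hFalow, hFb, hθsmall, hFphi, hsq2]
  -- the compact convex region K
  set W : Set (Fin m → ℝ) :=
    {u | u ∈ O ∧ gr u ≤ L0} ∩ {u | (∑ i, (u i - ustar i)^2) ≤ R^2} with hWdef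
  set K := closure W with hK
  have hWO : W ⊆ {u | u ∈ O ∧ gr u ≤ L0} := fun u hu => hu.1
  have hKO : K ⊆ O := fun z hz => hclosO z W hWO hz
  have hWconv : Convex ℝ W := by
    apply Convex.inter
    · exact (hgconv.subset hOD (hDg.interior)).convex_le L0
    · have := (convexOn_sumSq ustar).convex_le (R^2)
      simpa using this
  have hKconv : Convex ℝ K := hWconv.closure
  have hKcomp : IsCompact K := by
    apply (isCompact_sumSq_ball ustar R).of_isClosed_subset isClosed_closure
    apply closure_minimal (fun u hu => hu.2) (isCompact_sumSq_ball ustar R).isClosed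
  have htrajK : ∀ r k, k ≤ n → E.mulVec (xi r k) ∈ K := by
    intro r k hk
    apply subset_closure
    obtain ⟨e1, e2, e3⟩ := htraj r k hk
    exact ⟨⟨hDgO e2, (hgF _).trans e3⟩, hbound _ e1 e2 e3⟩
  have hKne : K.Nonempty := ⟨_, htrajK 0 0 (Nat.zero_le n)⟩
  obtain ⟨σ0, hσ0pos, hσ0⟩ := exists_strong_const hm hO hgC2 hhess hKO hKcomp hKne
  -- column norms
  set csq : Fin n → ℝ := fun j => ∑ i, (E i j)^2 with hcsq
  have hcsqpos : ∀ j, 0 < csq j := by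
    intro j
    obtain ⟨i, hi⟩ := hE j
    exact Finset.sum_pos' (fun k _ => sq_nonneg _)
      ⟨i, Finset.mem_univ i, pow_two_pos_of_ne_zero hi⟩
  obtain ⟨j0, -, hj0min⟩ :=
    Finset.exists_min_image Finset.univ csq ⟨⟨0, hn⟩, Finset.mem_univ _⟩
  set cmin := csq j0 with hcmin
  have hcminpos : 0 < cmin := hcsqpos j0
  -- per-step decrease
  have hdec : ∀ r k (hk : k < n),
      (σ0/4) * (csq ⟨k, hk⟩ * (xi r (k+1) ⟨k, hk⟩ - xi r k ⟨k, hk⟩)^2)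
        ≤ F (xi r k) - F (xi r (k+1)) := by
    intro r k hk
    set i : Fin n := ⟨k, hk⟩ with hidef
    obtain ⟨haX, haDg, haF⟩ := htraj r k hk.le
    obtain ⟨hbX, hbDg, hbF⟩ := htraj r (k+1) (Nat.succ_le_of_lt hk)
    obtain ⟨h1, h2, h3, h4⟩ := hstep r i
    set a := xi r k with hadef
    set b := xi r (k+1) with hbdef
    set md := (1/2 : ℝ) • a + (1/2 : ℝ) • b with hmd
    have hmdX : md ∈ X := hXconv haX hbX (by norm_num) (by norm_num) (by norm_num)
    have hmdcoords : ∀ j, j ≠ i → md j = a j := by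
      intro j hj
      have hbj : b j = a j := h3 j hj
      simp only [hmd, Pi.add_apply, Pi.smul_apply, smul_eq_mul]
      rw [hbj]; ring
    have hua : E.mulVec a ∈ K := htrajK r k hk.le
    have hub : E.mulVec b ∈ K := htrajK r (k+1) (Nat.succ_le_of_lt hk)
    have hmvmd : E.mulVec md = (1/2 : ℝ) • E.mulVec a + (1/2 : ℝ) • E.mulVec b := by
      rw [hmd, Matrix.mulVec_add, Matrix.mulVec_smul, Matrix.mulVec_smul]
    have hmdK : E.mulVec md ∈ K := by
      rw [hmvmd]
      exact hKconv hua hub (by norm_num) (by norm_num) (by norm_num)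
    have hFbmd : F b ≤ F md := h4 md hmdX hmdcoords (hOD (hKO hmdK))
    have hgmd := strong_midpoint hO hgC2 hKO hKconv hσ0 hua hub
    have hpenmd := hpencombo a b (1/2) (1/2) (by norm_num) (by norm_num)
    have hFmd : F md ≤ F a/2 + F b/2
        - σ0/8 * (∑ l, (E.mulVec b l - E.mulVec a l)^2) := by
      rw [hF md]
      have hmvmd2 : E.mulVec md = (1/2 : ℝ) • (E.mulVec a + E.mulVec b) := by
        rw [hmvmd, smul_add]
      rw [hmvmd2]
      have h5 := mul_le_mul_of_nonneg_left hpenmd hlam.le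
      have hgr1 : gr (E.mulVec a) = F a - lam * ∑ l ∈ S, |a l| := by rw [hF a]; ring
      have hgr2 : gr (E.mulVec b) = F b - lam * ∑ l ∈ S, |b l| := by rw [hF b]; ring
      rw [hgr1, hgr2] at hgmd
      nlinarith [hgmd, h5]
    have hsumd : (∑ l, (E.mulVec b l - E.mulVec a l)^2) = csq i * (b i - a i)^2 := by
      have hba : b - a = Pi.single i (b i - a i) := by
        ext j
        by_cases hj : j = i
        · subst hj; simp
        · simp only [Pi.sub_apply, Pi.single_apply]
          rw [h3 j hj]
          simp [hj]
      have hptw : ∀ l, E.mulVec b l - E.mulVec a l = E l i * (b i - a i) := by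
        intro l
        have : E.mulVec b l - E.mulVec a l = E.mulVec (b - a) l := by
          rw [Matrix.mulVec_sub]; simp
        rw [this, hba, Matrix.mulVec_single]; simp
      calc (∑ l, (E.mulVec b l - E.mulVec a l)^2)
          = ∑ l, (E l i)^2 * (b i - a i)^2 := by
            apply Finset.sum_congr rfl; intro l _; rw [hptw l]; ring
        _ = csq i * (b i - a i)^2 := by rw [← Finset.sum_mul]
    rw [hsumd] at hFmd
    linarith [hFbmd, hFmd]
  -- coordinate bookkeeping
  have hcoordA : ∀ r (j : Fin n) k, (j:ℕ)+1 ≤ k → k ≤ n → xi r k j = xi r ((j:ℕ)+1) j := by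
    intro r j k
    induction k with
    | zero => intro h1 _; omega
    | succ k ih =>
      intro h1 h2
      by_cases hkj : (j:ℕ)+1 = k+1
      · rw [hkj]
      · have h1' : (j:ℕ)+1 ≤ k := by omega
        have hkn : k < n := by omega
        have hjne : j ≠ (⟨k, hkn⟩ : Fin n) := by
          intro hcontra
          have : (j:ℕ) = k := by rw [hcontra]
          omega
        have hstep3 := (hstep r ⟨k, hkn⟩).2.2.1 j hjne
        rw [hstep3]
        exact ih h1' (by omega)
  have hcoordB : ∀ r (j : Fin n) k, k ≤ (j:ℕ) → xi r k j = x r j := by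
    intro r j k
    induction k with
    | zero => intro _; rw [hxi0]
    | succ k ih =>
      intro h1
      have hkn : k < n := by have := j.isLt; omega
      have hjne : j ≠ (⟨k, hkn⟩ : Fin n) := by
        intro hcontra
        have : (j:ℕ) = k := by rw [hcontra]
        omega
      have hstep3 := (hstep r ⟨k, hkn⟩).2.2.1 j hjne
      rw [hstep3]
      exact ih (by omega)
  have hdelta : ∀ r (j : Fin n), x (r+1) j - x r j = xi r ((j:ℕ)+1) j - xi r (j:ℕ) j := by
    intro r j
    rw [hxsucc r, hcoordA r j n (Nat.succ_le_of_lt j.isLt) le_rfl,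
      hcoordB r j (j:ℕ) le_rfl]
  -- per-cycle decrease
  have hcycle : ∀ r, (σ0/4) * cmin * (∑ j, ((x (r+1) - x r) j)^2)
      ≤ F (x r) - F (x (r+1)) := by
    intro r
    have htel : F (x r) - F (x (r+1))
        = ∑ k ∈ Finset.range n, (F (xi r k) - F (xi r (k+1))) := by
      rw [Finset.sum_range_sub' (fun k => F (xi r k))]
      rw [hxi0, hxsucc]
    rw [htel, Finset.mul_sum]
    rw [← Fin.sum_univ_eq_sum_range (fun k => F (xi r k) - F (xi r (k+1))) n]
    apply Finset.sum_le_sum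
    intro j _
    have hj : (j:ℕ) < n := j.isLt
    have hdec' := hdec r (j:ℕ) hj
    have hjeta : (⟨(j:ℕ), hj⟩ : Fin n) = j := Fin.eta j hj
    rw [hjeta] at hdec'
    have hΔ : (x (r+1) - x r) j = xi r ((j:ℕ)+1) j - xi r (j:ℕ) j := by
      rw [Pi.sub_apply]; exact hdelta r j
    rw [hΔ]
    calc (σ0/4) * cmin * (xi r ((j:ℕ)+1) j - xi r (j:ℕ) j)^2
        ≤ (σ0/4) * (csq j * (xi r ((j:ℕ)+1) j - xi r (j:ℕ) j)^2) := by
          have hle := hj0min j (Finset.mem_univ j)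
          have h8 := mul_le_mul_of_nonneg_right hle
            (sq_nonneg (xi r ((j:ℕ)+1) j - xi r (j:ℕ) j))
          nlinarith [h8, hσ0pos]
      _ ≤ F (xi r (j:ℕ)) - F (xi r ((j:ℕ)+1)) := hdec'
  -- convergence
  have hFanti : ∀ r, F (x (r+1)) ≤ F (x r) := by
    intro r
    obtain ⟨-, -, h⟩ := hseg r (hxmem r).1 (hxmem r).2.1 n le_rfl
    rw [hxsucc r]
    exact h
  have hanti : Antitone (fun r => F (x r)) := antitone_nat_of_succ_le hFanti
  have hbdd : BddBelow (Set.range fun r => F (x r)) := by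
    refine ⟨Fstar, ?_⟩
    rintro y ⟨r, rfl⟩
    exact hFstarle _ (hxmem r).1 (hxmem r).2.1
  have hFtend := tendsto_atTop_ciInf hanti hbdd
  have hdiff0 : Tendsto (fun r => F (x r) - F (x (r+1))) atTop (nhds 0) := by
    have h2 : Tendsto (fun r => F (x (r+1))) atTop (nhds (⨅ r, F (x r))) :=
      hFtend.comp (tendsto_add_atTop_nat 1)
    simpa using hFtend.sub h2
  have hcpos : (0:ℝ) < (σ0/4) * cmin := by positivity
  have hsq0 : Tendsto (fun r => ∑ j, ((x (r+1) - x r) j)^2) atTop (nhds 0) := by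
    have hup : ∀ r, (∑ j, ((x (r+1) - x r) j)^2)
        ≤ ((σ0/4)*cmin)⁻¹ * (F (x r) - F (x (r+1))) :=
      fun r => (le_inv_mul_iff₀ hcpos).mpr (hcycle r)
    have hg : Tendsto (fun r => ((σ0/4)*cmin)⁻¹ * (F (x r) - F (x (r+1)))) atTop (nhds 0) := by
      have := hdiff0.const_mul (((σ0/4)*cmin)⁻¹)
      simpa using this
    exact squeeze_zero (fun r => Finset.sum_nonneg fun j _ => sq_nonneg _) hup hg
  have hfinal := (Real.continuous_sqrt.tendsto 0).comp hsq0
  rw [Real.sqrt_zero] at hfinal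
  have henorm : (fun r => _root_.enorm (x (r+1) - x r))
      = (Real.sqrt ∘ fun r => ∑ j, ((x (r+1) - x r) j)^2) := by
    funext r
    simp [_root_.enorm, Function.comp]
  rw [henorm]
  exact hfinal
end

section
/- Let t* ∈ ℝ^m be the common value of E x* over x* ∈ 𝒳*, and set t^{r,i} = E x^{r,i}. Then for every 0 ≤ i ≤ n, ‖t^{r,i} − t*‖ → 0 as r → ∞. -/
open Filter Topology Matrix

/-- Euclidean norm of a vector in `ℝ^k`. -/
noncomputable def euclNorm {k : ℕ} (v : Fin k → ℝ) : ℝ := Real.sqrt (∑ i, v i ^ 2)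

lemma isClosed_nonnegSpan {V : Type*} [NormedAddCommGroup V] [NormedSpace ℝ V]
    [FiniteDimensional ℝ V] {ι : Type*} [Fintype ι] [DecidableEq ι] (w : ι → V) (s : Finset ι) :
    IsClosed {x : V | ∃ a : ι → ℝ, (∀ i, 0 ≤ a i) ∧ ∑ i ∈ s, a i • w i = x} := by
  induction s using Finset.strongInduction with
  | _ s ih =>
  by_cases hli : LinearIndependent ℝ (fun i : {y // y ∈ s} => w i)
  · -- independent case: closed embedding image of the orthant
    let T : ({y // y ∈ s} → ℝ) →ₗ[ℝ] V :=
      { toFun := fun b => ∑ i : {y // y ∈ s}, b i • w i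
        map_add' := by
          intro b c; simp [add_smul, Finset.sum_add_distrib]
        map_smul' := by
          intro c b; simp [Finset.smul_sum, smul_smul] }
    have hker : LinearMap.ker T = ⊥ := by
      rw [LinearMap.ker_eq_bot']
      intro b hb
      have := (Fintype.linearIndependent_iff.1 hli) b hb
      funext i; exact this i
    have hset : {x : V | ∃ a : ι → ℝ, (∀ i, 0 ≤ a i) ∧ ∑ i ∈ s, a i • w i = x}
        = T '' {b : {y // y ∈ s} → ℝ | ∀ i, 0 ≤ b i} := by
      ext x
      constructor
      · rintro ⟨a, ha, rfl⟩
        refine ⟨fun i => a i, fun i => ha i, ?_⟩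
        show ∑ i : {y // y ∈ s}, a i • w i = _
        rw [← Finset.sum_attach s (fun i => a i • w i)]
        rfl
      · rintro ⟨b, hb, rfl⟩
        refine ⟨fun i => if h : i ∈ s then b ⟨i, h⟩ else 0, ?_, ?_⟩
        · intro i; by_cases h : i ∈ s <;> simp [h, hb ⟨i, _⟩]
        · show _ = ∑ i : {y // y ∈ s}, b i • w i
          rw [← Finset.sum_attach s (fun i => (if h : i ∈ s then b ⟨i, h⟩ else 0) • w i)]
          exact Finset.sum_congr rfl (fun i _ => by simp [i.2])
    rw [hset]
    have horth : IsClosed {b : {y // y ∈ s} → ℝ | ∀ i, 0 ≤ b i} := by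
      have : {b : {y // y ∈ s} → ℝ | ∀ i, 0 ≤ b i} = ⋂ i, {b | 0 ≤ b i} := by
        ext b; simp [Set.mem_iInter]
      rw [this]
      exact isClosed_iInter fun i => isClosed_le continuous_const (continuous_apply i)
    exact (T.isClosedEmbedding_of_injective hker).isClosedMap _ horth
  · -- dependent case: union over erased index sets
    obtain ⟨g, hgsum, j₁, hj₁⟩ := Fintype.not_linearIndependent_iff.1 hli
    -- build ν : ι → ℝ supported on s, ∑_{i∈s} ν i • w i = 0, with a negative entry in s
    have key : ∃ ν : ι → ℝ, (∑ i ∈ s, ν i • w i = 0) ∧ ∃ j ∈ s, ν j < 0 := by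
      rcases lt_trichotomy (g j₁) 0 with hneg | hzero | hpos
      · refine ⟨fun i => if h : i ∈ s then g ⟨i, h⟩ else 0, ?_, j₁, j₁.2, by simp [j₁.2]; exact hneg⟩
        rw [← Finset.sum_attach s (fun i => (if h : i ∈ s then g ⟨i, h⟩ else 0) • w i)]
        rw [← hgsum]
        exact Finset.sum_congr rfl (fun i _ => by simp [i.2])
      · exact absurd hzero hj₁
      · refine ⟨fun i => if h : i ∈ s then -g ⟨i, h⟩ else 0, ?_, j₁, j₁.2, by simp [j₁.2]; exact hpos⟩
        have : ∑ i : {y // y ∈ s}, (-g i) • w i = 0 := by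
          simp only [neg_smul, Finset.sum_neg_distrib]
          rw [hgsum]; simp
        rw [← Finset.sum_attach s (fun i => (if h : i ∈ s then -g ⟨i, h⟩ else 0) • w i)]
        rw [← this]
        exact Finset.sum_congr rfl (fun i _ => by simp [i.2])
    obtain ⟨ν, hνsum, j₂, hj₂s, hj₂neg⟩ := key
    have hunion : {x : V | ∃ a : ι → ℝ, (∀ i, 0 ≤ a i) ∧ ∑ i ∈ s, a i • w i = x}
        = ⋃ j ∈ s, {x : V | ∃ a : ι → ℝ, (∀ i, 0 ≤ a i) ∧ ∑ i ∈ s.erase j, a i • w i = x} := by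
      ext x
      simp only [Set.mem_iUnion, Set.mem_setOf_eq]
      constructor
      · rintro ⟨a, ha, rfl⟩
        -- shift along ν to kill a coordinate
        set N := s.filter (fun j => ν j < 0) with hN
        have hNne : N.Nonempty := ⟨j₂, Finset.mem_filter.2 ⟨hj₂s, hj₂neg⟩⟩
        obtain ⟨j₀, hj₀N, hj₀min⟩ := N.exists_min_image (fun j => a j / (-ν j)) hNne
        have hj₀s : j₀ ∈ s := (Finset.mem_filter.1 hj₀N).1
        have hj₀neg : ν j₀ < 0 := (Finset.mem_filter.1 hj₀N).2
        set c := a j₀ / (-ν j₀) with hc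
        have hcnn : 0 ≤ c := div_nonneg (ha j₀) (by linarith)
        have ha' : ∀ i ∈ s, 0 ≤ a i + c * ν i := by
          intro i his
          rcases le_or_gt 0 (ν i) with h | h
          · have := mul_nonneg hcnn h; linarith [ha i]
          · have hiN : i ∈ N := Finset.mem_filter.2 ⟨his, h⟩
            have this := hj₀min i hiN
            have hpos : (0:ℝ) < -ν i := by linarith
            have h2 : c * (-ν i) ≤ a i / (-ν i) * (-ν i) :=
              mul_le_mul_of_nonneg_right this (le_of_lt hpos)
            rw [div_mul_cancel₀ (a i) (ne_of_gt hpos)] at h2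
            nlinarith
        have hj₀zero : a j₀ + c * ν j₀ = 0 := by
          have hne : ν j₀ ≠ 0 := ne_of_lt hj₀neg
          have h4 : c * (-ν j₀) = a j₀ := by
            rw [hc]; exact div_mul_cancel₀ (a j₀) (neg_ne_zero.2 hne)
          have h5 : c * ν j₀ = -(c * (-ν j₀)) := by ring
          linarith
        refine ⟨j₀, hj₀s, fun i => if i ∈ s then a i + c * ν i else 0, ?_, ?_⟩
        · intro i; by_cases h : i ∈ s
          · simp [h]; exact ha' i h
          · simp [h]
        · have hsum : ∑ i ∈ s, (if i ∈ s then a i + c * ν i else 0) • w i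
              = ∑ i ∈ s, a i • w i := by
            rw [Finset.sum_congr rfl (fun i hi => by rw [if_pos hi])]
            simp only [add_smul, Finset.sum_add_distrib]
            have : ∑ i ∈ s, (c * ν i) • w i = c • ∑ i ∈ s, ν i • w i := by
              rw [Finset.smul_sum]
              exact Finset.sum_congr rfl (fun i _ => by rw [smul_smul])
            rw [this, hνsum]; simp
          have herase : ∑ i ∈ s.erase j₀, (if i ∈ s then a i + c * ν i else 0) • w i
              = ∑ i ∈ s, (if i ∈ s then a i + c * ν i else 0) • w i
                - (if j₀ ∈ s then a j₀ + c * ν j₀ else 0) • w j₀ := by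
            rw [eq_sub_iff_add_eq, Finset.sum_erase_add s _ hj₀s]
          rw [herase, hsum, if_pos hj₀s, hj₀zero]
          simp
      · rintro ⟨j, hjs, a, ha, rfl⟩
        refine ⟨fun i => if i = j then 0 else a i, fun i => by by_cases h : i = j <;> simp [h, ha i], ?_⟩
        have : ∑ i ∈ s, (if i = j then 0 else a i) • w i
            = ∑ i ∈ s.erase j, (if i = j then 0 else a i) • w i
              + (if j = j then 0 else a j) • w j := by
          rw [Finset.sum_erase_add s _ hjs]
        have h2 : ∑ i ∈ s.erase j, (if i = j then 0 else a i) • w i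
            = ∑ i ∈ s.erase j, a i • w i :=
          Finset.sum_congr rfl (fun i hi => by rw [if_neg (Finset.ne_of_mem_erase hi)])
        rw [this, h2]
        simp
    rw [hunion]
    exact Set.Finite.isClosed_biUnion s.finite_toSet
      (fun j hj => ih (s.erase j) (Finset.erase_ssubset hj))


section Toolkit
variable {V : Type*} [NormedAddCommGroup V] [NormedSpace ℝ V]

/-- A convex function on `[0,∞)` bounded above is nonincreasing. -/
lemma convexOn_nonincreasing_of_bddAbove {f : ℝ → ℝ} (hf : ConvexOn ℝ (Set.Ici (0:ℝ)) f)
    {C : ℝ} (hb : ∀ σ ∈ Set.Ici (0:ℝ), f σ ≤ C) {σ1 σ2 : ℝ} (h0 : 0 ≤ σ1) (h12 : σ1 ≤ σ2) :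
    f σ2 ≤ f σ1 := by
  rcases eq_or_lt_of_le h12 with rfl | hlt
  · exact le_refl _
  · by_contra hcon
    push_neg at hcon
    set d := f σ2 - f σ1 with hd
    have hdpos : 0 < d := by simp [hd]; linarith
    set τ := σ2 + (C + 1 - f σ2) * (σ2 - σ1) / d with hτ
    have hCge : f σ2 ≤ C := hb σ2 (by simp; linarith)
    have hτgt : σ2 < τ := by
      rw [hτ]
      have : 0 < (C + 1 - f σ2) * (σ2 - σ1) / d :=
        div_pos (mul_pos (by linarith) (by linarith)) hdpos
      linarith
    have hslope := hf.slope_mono_adjacent (Set.mem_Ici.2 h0)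
      (Set.mem_Ici.2 (by linarith : (0:ℝ) ≤ τ)) hlt hτgt
    have h1 : (f σ2 - f σ1) / (σ2 - σ1) ≤ (f τ - f σ2) / (τ - σ2) := hslope
    have h2 : 0 < τ - σ2 := by linarith
    have h3 : 0 < σ2 - σ1 := by linarith
    have h4 : (f σ2 - f σ1) / (σ2 - σ1) * (τ - σ2) ≤ f τ - f σ2 := by
      rw [← le_div_iff₀ h2]; exact h1
    have h5 : τ - σ2 = (C + 1 - f σ2) * (σ2 - σ1) / d := by rw [hτ]; ring
    have h6 : (f σ2 - f σ1) / (σ2 - σ1) * (τ - σ2) = C + 1 - f σ2 := by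
      rw [h5, ← hd]
      field_simp
    have h7 : f τ ≤ C := hb τ (by simp; linarith)
    rw [h6] at h4
    linarith

/-- Gradient inequality for a differentiable convex function on an open convex set. -/
lemma grad_inequality {s : Set V} (ho : IsOpen s) {gr : V → ℝ}
    (hconv : ConvexOn ℝ s gr) (hdiff : ∀ t ∈ s, DifferentiableAt ℝ gr t)
    {a b : V} (ha : a ∈ s) (hb : b ∈ s) :
    gr a + fderiv ℝ gr a (b - a) ≤ gr b := by
  have hline : HasDerivAt (fun u : ℝ => a + u • (b - a)) (b - a) 0 := by
    simpa using ((hasDerivAt_id (0:ℝ)).smul_const (b - a)).const_add a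
  have hφ : HasDerivAt (fun u : ℝ => gr (a + u • (b - a))) (fderiv ℝ gr a (b - a)) 0 := by
    have hfd : HasFDerivAt gr (fderiv ℝ gr a) ((fun u : ℝ => a + u • (b - a)) 0) := by
      simpa using (hdiff a ha).hasFDerivAt
    exact hfd.comp_hasDerivAt 0 hline
  have hslope := hasDerivAt_iff_tendsto_slope.1 hφ
  have hslope' : Tendsto (slope (fun u : ℝ => gr (a + u • (b - a))) 0) (𝓝[>] 0)
      (𝓝 (fderiv ℝ gr a (b - a))) :=
    hslope.mono_left (nhdsWithin_mono 0 (fun u hu => ne_of_gt hu))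
  have hev : ∀ᶠ u in 𝓝[>] (0:ℝ),
      slope (fun u : ℝ => gr (a + u • (b - a))) 0 u ≤ gr b - gr a := by
    filter_upwards [Ioc_mem_nhdsGT_of_mem (Set.mem_Ico.2 ⟨le_refl 0, zero_lt_one⟩)] with u hu
    obtain ⟨hu0, hu1⟩ := hu
    have hcombo : a + u • (b - a) = (1 - u) • a + u • b := by
      rw [smul_sub, sub_smul, one_smul]; abel
    have hle : gr (a + u • (b - a)) ≤ (1 - u) * gr a + u * gr b := by
      rw [hcombo]
      exact hconv.2 ha hb (by linarith) (le_of_lt hu0) (by ring)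
    rw [slope_def_field]
    simp only [zero_smul, add_zero, sub_zero]
    rw [div_le_iff₀ hu0]
    nlinarith
  have := le_of_tendsto hslope' hev
  linarith

/-- Limits of sequences with bounded `gr`-values stay in `Dg` (blow-up case). -/
lemma limit_mem_of_blowup {s : Set V} {gr : V → ℝ}
    (hbl : ∀ t₀ ∈ frontier s, Tendsto gr (𝓝[s] t₀) atTop)
    {p : ℕ → V} (hp : ∀ k, p k ∈ s) {C : ℝ} (hC : ∀ k, gr (p k) ≤ C)
    {t₀ : V} (hlim : Tendsto p atTop (𝓝 t₀)) : t₀ ∈ s ∪ (frontier s)ᶜ := by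
  by_cases h : t₀ ∈ s
  · exact Or.inl h
  · left
    exfalso
    have hfr : t₀ ∈ frontier s := by
      constructor
      · exact mem_closure_of_tendsto hlim (Eventually.of_forall hp)
      · intro hint
        exact h (interior_subset hint)
    have := (hbl t₀ hfr).comp
      (tendsto_nhdsWithin_of_tendsto_nhds_of_eventually_within p hlim
        (Eventually.of_forall hp))
    obtain ⟨k, hk⟩ := (tendsto_atTop.1 this (C + 1)).exists
    exact absurd (hC k) (by simp at hk; linarith)

/-- Openness of the domain from the blow-up condition. -/
lemma open_of_blowup {s : Set V} {gr : V → ℝ} (hs : Convex ℝ s)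
    (hne : (interior s).Nonempty) (hconv : ConvexOn ℝ s gr)
    (hbl : ∀ t₀ ∈ frontier (interior s), Tendsto gr (𝓝[interior s] t₀) atTop) :
    s ⊆ interior s := by
  obtain ⟨c, hc⟩ := hne
  intro t₀ ht₀
  by_contra hnotin
  set θ : ℕ → ℝ := fun k => 1 / (k + 2 : ℝ) with hθ
  have hθpos : ∀ k, 0 < θ k := fun k => by positivity
  have hθlt : ∀ k, θ k < 1 := by
    intro k
    rw [hθ]
    rw [div_lt_one (by positivity)]
    have : (0:ℝ) ≤ (k:ℝ) := Nat.cast_nonneg k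
    linarith
  set p : ℕ → V := fun k => θ k • c + (1 - θ k) • t₀ with hp
  have hpint : ∀ k, p k ∈ interior s := by
    intro k
    exact hs.combo_interior_closure_mem_interior hc (subset_closure ht₀)
      (hθpos k) (by linarith [hθlt k]) (by ring)
  have hθlim : Tendsto θ atTop (𝓝 0) := by
    have h1 : Tendsto (fun k : ℕ => ((k:ℝ) + 2)) atTop atTop :=
      tendsto_atTop_add_const_right atTop 2 tendsto_natCast_atTop_atTop
    show Tendsto (fun k : ℕ => 1 / ((k:ℝ) + 2)) atTop (𝓝 0)
    simp only [one_div]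
    exact h1.inv_tendsto_atTop
  have hplim : Tendsto p atTop (𝓝 t₀) := by
    have : Tendsto (fun k => θ k • (c - t₀) + t₀) atTop (𝓝 ((0:ℝ) • (c - t₀) + t₀)) :=
      ((hθlim.smul_const (c - t₀)).add_const t₀)
    simp only [zero_smul, zero_add] at this
    refine this.congr (fun k => ?_)
    rw [hp]
    simp only [smul_sub, sub_smul, one_smul]
    abel
  have hbound : ∀ k, gr (p k) ≤ max (gr c) (gr t₀) := by
    intro k
    have h1 : gr (p k) ≤ θ k * gr c + (1 - θ k) * gr t₀ :=
      hconv.2 (interior_subset hc) ht₀ (le_of_lt (hθpos k)) (by linarith [hθlt k]) (by ring)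
    have h2 : θ k * gr c + (1 - θ k) * gr t₀ ≤ max (gr c) (gr t₀) := by
      have hc' := le_max_left (gr c) (gr t₀)
      have ht' := le_max_right (gr c) (gr t₀)
      nlinarith [hθpos k, hθlt k]
    linarith
  have hfr : t₀ ∈ frontier (interior s) := by
    constructor
    · exact mem_closure_of_tendsto hplim (Eventually.of_forall hpint)
    · rw [interior_interior]; exact hnotin
  have := (hbl t₀ hfr).comp
    (tendsto_nhdsWithin_of_tendsto_nhds_of_eventually_within p hplim
      (Eventually.of_forall hpint))
  obtain ⟨k, hk⟩ := (tendsto_atTop.1 this (max (gr c) (gr t₀) + 1)).exists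
  simp only [Function.comp] at hk
  linarith [hbound k]

end Toolkit


lemma deriv_ge_of_right {ψ : ℝ → ℝ} {b c ε₀ : ℝ} (hψ : HasDerivAt ψ b 0) (hε₀ : 0 < ε₀)
    (h : ∀ ε : ℝ, 0 < ε → ε < ε₀ → ψ 0 ≤ ψ ε + c * ε) : -c ≤ b := by
  have hslope := hasDerivAt_iff_tendsto_slope.1 hψ
  have hslope' : Tendsto (slope ψ 0) (𝓝[>] 0) (𝓝 b) :=
    hslope.mono_left (nhdsWithin_mono 0 (fun u hu => ne_of_gt hu))
  refine ge_of_tendsto hslope' ?_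
  filter_upwards [Ioo_mem_nhdsGT_of_mem (Set.mem_Ico.2 ⟨le_refl 0, hε₀⟩)] with u hu
  obtain ⟨hu0, hu1⟩ := hu
  have := h u hu0 hu1
  rw [slope_def_field, sub_zero, le_div_iff₀ hu0]
  nlinarith

lemma deriv_le_of_left {ψ : ℝ → ℝ} {b c ε₀ : ℝ} (hψ : HasDerivAt ψ b 0) (hε₀ : 0 < ε₀)
    (h : ∀ ε : ℝ, -ε₀ < ε → ε < 0 → ψ 0 ≤ ψ ε + c * ε) : b ≤ -c := by
  have hslope := hasDerivAt_iff_tendsto_slope.1 hψ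
  have hslope' : Tendsto (slope ψ 0) (𝓝[<] 0) (𝓝 b) :=
    hslope.mono_left (nhdsWithin_mono 0 (fun u hu => ne_of_lt hu))
  refine le_of_tendsto hslope' ?_
  filter_upwards [Ioo_mem_nhdsLT_of_mem (Set.mem_Ioc.2 ⟨neg_lt_zero.2 hε₀, le_refl 0⟩)] with u hu
  obtain ⟨hu0, hu1⟩ := hu
  have := h u hu0 hu1
  rw [slope_def_field, sub_zero, div_le_iff_of_neg hu1]
  nlinarith

lemma kkt_step
    {m n : ℕ} {S : Finset (Fin n)} {lam : ℝ} (hlam : 0 < lam)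
    {E : Matrix (Fin m) (Fin n) ℝ} {Dg : Set (Fin m → ℝ)} {gr : (Fin m → ℝ) → ℝ}
    (hO : IsOpen Dg)
    (hgdiff : ∀ t ∈ Dg, DifferentiableAt ℝ gr t)
    {X : Set (Fin n → ℝ)} (hX : X = {x | ∀ i ∉ S, 0 ≤ x i})
    {F : (Fin n → ℝ) → ℝ} (hF : ∀ x, F x = gr (E.mulVec x) + lam * ∑ i ∈ S, |x i|)
    {p : Fin n → ℝ} (hpX : p ∈ X) (hpDg : E.mulVec p ∈ Dg)
    (i : Fin n)
    (hmin : ∀ y ∈ X, (∀ j, j ≠ i → y j = p j) → E.mulVec y ∈ Dg → F p ≤ F y) :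
    (i ∈ S → |fderiv ℝ gr (E.mulVec p) (fun k => E k i)| ≤ lam ∧
        fderiv ℝ gr (E.mulVec p) (fun k => E k i) * p i = -(lam * |p i|)) ∧
    (i ∉ S → 0 ≤ fderiv ℝ gr (E.mulVec p) (fun k => E k i) ∧
        fderiv ℝ gr (E.mulVec p) (fun k => E k i) * p i = 0) := by
  set t' := E.mulVec p with ht'
  set col : Fin m → ℝ := fun k => E k i with hcol
  set b := fderiv ℝ gr t' col with hb
  set ψ : ℝ → ℝ := fun ε => gr (t' + ε • col) with hψdef
  have hψ0 : ψ 0 = gr t' := by simp [hψdef]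
  -- derivative
  have hψ : HasDerivAt ψ b 0 := by
    have hline : HasDerivAt (fun u : ℝ => t' + u • col) col 0 := by
      simpa using ((hasDerivAt_id (0:ℝ)).smul_const col).const_add t'
    have hfd : HasFDerivAt gr (fderiv ℝ gr t') ((fun u : ℝ => t' + u • col) 0) := by
      simpa using (hgdiff t' hpDg).hasFDerivAt
    exact hfd.comp_hasDerivAt 0 hline
  -- the update points
  set y : ℝ → (Fin n → ℝ) := fun ε => Function.update p i (p i + ε) with hy
  have hyeq : ∀ ε : ℝ, E.mulVec (y ε) = t' + ε • col := by
    intro ε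
    have h1 : y ε = p + Pi.single i ε := by
      funext j
      by_cases hj : j = i
      · subst hj; simp [hy]
      · simp [hy, Function.update_apply, hj, Pi.single_apply]
    rw [h1, Matrix.mulVec_add, Matrix.mulVec_single]
    funext k
    simp [ht', hcol, mul_comm]
  -- small moves stay in Dg
  obtain ⟨η, hη, hball⟩ := Metric.isOpen_iff.1 hO t' hpDg
  set ε₀ := η / (‖col‖ + 1) with hε₀def
  have hε₀ : 0 < ε₀ := div_pos hη (by positivity)
  have hmem : ∀ ε : ℝ, |ε| < ε₀ → t' + ε • col ∈ Dg := by
    intro ε hε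
    apply hball
    rw [Metric.mem_ball, dist_eq_norm]
    have h2 : t' + ε • col - t' = ε • col := by abel
    rw [h2, norm_smul, Real.norm_eq_abs]
    calc |ε| * ‖col‖ ≤ |ε| * (‖col‖ + 1) := by
          apply mul_le_mul_of_nonneg_left (by linarith [norm_nonneg col]) (abs_nonneg ε)
      _ < ε₀ * (‖col‖ + 1) := by
          apply mul_lt_mul_of_pos_right hε (by positivity)
      _ = η := by rw [hε₀def]; field_simp
  -- key inequality from minimality
  have hkey : ∀ ε : ℝ, |ε| < ε₀ → (i ∈ S ∨ 0 ≤ p i + ε) →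
      ψ 0 ≤ ψ ε + lam * (if i ∈ S then |p i + ε| - |p i| else 0) := by
    intro ε hε hfeas
    have hyX : y ε ∈ X := by
      rw [hX]
      intro j hj
      by_cases hji : j = i
      · subst hji
        rcases hfeas with hin | hge
        · exact absurd hin hj
        · simpa [hy] using hge
      · have h3 : y ε j = p j := by simp [hy, Function.update_apply, hji]
        rw [h3]
        exact (hX ▸ hpX) j hj
    have hagree : ∀ j, j ≠ i → y ε j = p j := by
      intro j hj; simp [hy, Function.update_apply, hj]
    have hmin' := hmin (y ε) hyX hagree (by rw [hyeq]; exact hmem ε hε)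
    rw [hF, hF, hyeq ε] at hmin'
    have hsum : ∑ j ∈ S, |y ε j| = (∑ j ∈ S, |p j|) + (if i ∈ S then |p i + ε| - |p i| else 0) := by
      by_cases hiS : i ∈ S
      · rw [if_pos hiS]
        have h1 : ∑ j ∈ S, |y ε j| = |p i + ε| + ∑ j ∈ S.erase i, |p j| := by
          have h4 : ∀ j ∈ S.erase i, |y ε j| = |p j| := by
            intro j hj
            rw [hagree j (Finset.ne_of_mem_erase hj)]
          rw [← Finset.add_sum_erase S _ hiS]
          congr 1
          · simp [hy]
          · exact Finset.sum_congr rfl h4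
        have h2 : ∑ j ∈ S, |p j| = |p i| + ∑ j ∈ S.erase i, |p j| :=
          (Finset.add_sum_erase S _ hiS).symm
        rw [h1, h2]; ring
      · rw [if_neg hiS, add_zero]
        refine Finset.sum_congr rfl (fun j hj => ?_)
        rw [hagree j (fun hc => hiS (hc ▸ hj))]
    rw [hsum] at hmin'
    rw [hψ0]
    show gr t' ≤ gr (t' + ε • col) + lam * (if i ∈ S then |p i + ε| - |p i| else 0)
    have hexp : lam * ((∑ j ∈ S, |p j|) + (if i ∈ S then |p i + ε| - |p i| else 0))
        = lam * (∑ j ∈ S, |p j|) + lam * (if i ∈ S then |p i + ε| - |p i| else 0) := by ring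
    rw [hexp] at hmin'
    linarith
  have hpiX : i ∉ S → 0 ≤ p i := fun hi => (hX ▸ hpX) i hi
  constructor
  · intro hiS
    have hub : -lam ≤ b := by
      refine deriv_ge_of_right hψ hε₀ (fun ε hε1 hε2 => ?_)
      have h := hkey ε (by rw [abs_of_pos hε1]; exact hε2) (Or.inl hiS)
      rw [if_pos hiS] at h
      have habs : |p i + ε| - |p i| ≤ ε := by
        have h5 := abs_add_le (p i) ε
        rw [abs_of_pos hε1] at h5
        linarith
      nlinarith
    have hlb : b ≤ lam := by
      have h6 : b ≤ -(-lam) := by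
        refine deriv_le_of_left hψ hε₀ (fun ε hε1 hε2 => ?_)
        have h := hkey ε (by rw [abs_of_neg hε2]; linarith) (Or.inl hiS)
        rw [if_pos hiS] at h
        have habs : |p i + ε| - |p i| ≤ -ε := by
          have h5 := abs_add_le (p i) ε
          rw [abs_of_neg hε2] at h5
          linarith
        nlinarith
      linarith
    refine ⟨abs_le.2 ⟨hub, hlb⟩, ?_⟩
    rcases lt_trichotomy (p i) 0 with hneg | hzero | hpos
    · -- b = lam
      have hge : lam ≤ b := by
        have h2 : (0:ℝ) < min ε₀ (-(p i)) := lt_min hε₀ (by linarith)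
        have h7 : -(-lam) ≤ b := by
          refine deriv_ge_of_right hψ h2 (fun ε hε1 hε2 => ?_)
          have hεε₀ : ε < ε₀ := lt_of_lt_of_le hε2 (min_le_left _ _)
          have hεpi : ε < -(p i) := lt_of_lt_of_le hε2 (min_le_right _ _)
          have h := hkey ε (by rw [abs_of_pos hε1]; exact hεε₀) (Or.inl hiS)
          rw [if_pos hiS] at h
          have habs : |p i + ε| - |p i| = -ε := by
            rw [abs_of_neg hneg, abs_of_neg (by linarith : p i + ε < 0)]
            ring
          rw [habs] at h
          nlinarith
        linarith
      have hbe : b = lam := le_antisymm hlb hge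
      rw [hbe, abs_of_neg hneg]; ring
    · rw [hzero]; simp
    · -- b = -lam
      have hle : b ≤ -lam := by
        have h2 : (0:ℝ) < min ε₀ (p i) := lt_min hε₀ hpos
        refine deriv_le_of_left hψ h2 (fun ε hε1 hε2 => ?_)
        have hεε₀ : -ε₀ < ε := lt_of_le_of_lt (neg_le_neg (min_le_left _ _)) hε1
        have hεpi : -(p i) < ε := lt_of_le_of_lt (neg_le_neg (min_le_right _ _)) hε1
        have h := hkey ε (by rw [abs_of_neg hε2]; linarith) (Or.inl hiS)
        rw [if_pos hiS] at h
        have habs : |p i + ε| - |p i| = ε := by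
          rw [abs_of_pos hpos, abs_of_pos (by linarith : 0 < p i + ε)]
          ring
        rw [habs] at h
        nlinarith
      have hbe : b = -lam := le_antisymm hle (by linarith)
      rw [hbe, abs_of_pos hpos]; ring
  · intro hiS
    have hpi := hpiX hiS
    have hge0 : 0 ≤ b := by
      have h7 : -(0:ℝ) ≤ b := by
        refine deriv_ge_of_right hψ hε₀ (fun ε hε1 hε2 => ?_)
        have h := hkey ε (by rw [abs_of_pos hε1]; exact hε2) (Or.inr (by linarith))
        rw [if_neg hiS] at h
        nlinarith
      linarith
    refine ⟨hge0, ?_⟩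
    rcases eq_or_lt_of_le hpi with heq | hpos
    · rw [← heq]; ring
    · have hle0 : b ≤ 0 := by
        have h2 : (0:ℝ) < min ε₀ (p i) := lt_min hε₀ hpos
        have h8 : b ≤ -(0:ℝ) := by
          refine deriv_le_of_left hψ h2 (fun ε hε1 hε2 => ?_)
          have hεε₀ : -ε₀ < ε := lt_of_le_of_lt (neg_le_neg (min_le_left _ _)) hε1
          have hεpi : -(p i) < ε := lt_of_le_of_lt (neg_le_neg (min_le_right _ _)) hε1
          have h := hkey ε (by rw [abs_of_neg hε2]; linarith) (Or.inr (by linarith))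
          rw [if_neg hiS] at h
          nlinarith
        linarith
      have hbe : b = 0 := le_antisymm hle0 hge0
      rw [hbe]; ring

set_option maxHeartbeats 1000000 in
lemma bounded_iterates
    {m n : ℕ} {S : Finset (Fin n)} {lam : ℝ} (hlam : 0 < lam)
    {E : Matrix (Fin m) (Fin n) ℝ} {Dg : Set (Fin m → ℝ)} {gr : (Fin m → ℝ) → ℝ}
    (hO : IsOpen Dg) (hDg : Convex ℝ Dg) (hgconv : ConvexOn ℝ Dg gr)
    (hgcont : ContinuousOn gr Dg)
    (hmemlim : ∀ (C : ℝ) (p : ℕ → Fin m → ℝ) (q : Fin m → ℝ), (∀ k, p k ∈ Dg) →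
        (∀ k, gr (p k) ≤ C) → Tendsto p atTop (𝓝 q) → q ∈ Dg)
    {X : Set (Fin n → ℝ)} (hX : X = {x | ∀ i ∉ S, 0 ≤ x i})
    {F : (Fin n → ℝ) → ℝ} (hF : ∀ x, F x = gr (E.mulVec x) + lam * ∑ i ∈ S, |x i|)
    {xs : Fin n → ℝ} (hxsX : xs ∈ X) (hxsDg : E.mulVec xs ∈ Dg)
    (hxsmin : ∀ y ∈ X, E.mulVec y ∈ Dg → F xs ≤ F y)
    {tstar : Fin m → ℝ} (hts : E.mulVec xs = tstar)
    (htstar2 : ∀ y ∈ X, E.mulVec y ∈ Dg → F y = F xs → E.mulVec y = tstar)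
    (w : ℕ → Fin n → ℝ) (hwX : ∀ k, w k ∈ X) (hwDg : ∀ k, E.mulVec (w k) ∈ Dg)
    {M0 : ℝ} (hwF : ∀ k, F (w k) ≤ M0) :
    ∃ C, ∀ k, ‖E.mulVec (w k)‖ ≤ C ∧ ∀ j ∈ S, |w k j| ≤ C := by
  classical
  by_contra hcon
  push_neg at hcon
  -- linear maps
  set χlin : (Fin n → ℝ) →ₗ[ℝ] (Fin n → ℝ) :=
    { toFun := fun v j => if j ∈ S then v j else 0
      map_add' := by intro a b; funext j; by_cases h : j ∈ S <;> simp [h]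
      map_smul' := by intro c a; funext j; by_cases h : j ∈ S <;> simp [h] } with hχlin
  set Ahat : (Fin n → ℝ) →ₗ[ℝ] (Fin m → ℝ) × (Fin n → ℝ) :=
    (Matrix.mulVecLin E).prod χlin with hAhat
  have hA1 : ∀ v, (Ahat v).1 = E.mulVec v := fun v => rfl
  have hA2 : ∀ v, (Ahat v).2 = fun j => if j ∈ S then v j else 0 := fun v => rfl
  set gh : (Fin m → ℝ) × (Fin n → ℝ) → ℝ :=
    fun z => gr z.1 + lam * ∑ j ∈ S, |z.2 j| with hgh
  have hghF : ∀ v, gh (Ahat v) = F v := by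
    intro v
    rw [hgh, hF]
    simp only [hA1]
    congr 2
    exact Finset.sum_congr rfl (fun j hj => by rw [hA2]; simp [hj])
  set zs := Ahat xs with hzs
  have hzs1 : zs.1 = tstar := by rw [hzs, hA1, hts]
  set M1 := max (F xs) M0 with hM1
  -- find far-away points
  have hfar : ∀ C : ℝ, ∃ k, C < ‖Ahat (w k) - zs‖ := by
    intro C
    obtain ⟨k, hk⟩ := hcon (C + ‖zs‖)
    refine ⟨k, ?_⟩
    have hbig : C + ‖zs‖ < ‖Ahat (w k)‖ := by
      by_cases hcase : ‖E.mulVec (w k)‖ ≤ C + ‖zs‖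
      · obtain ⟨j, hjS, hj⟩ := hk hcase
        calc C + ‖zs‖ < |w k j| := hj
          _ = ‖(Ahat (w k)).2 j‖ := by rw [hA2]; simp [hjS]
          _ ≤ ‖(Ahat (w k)).2‖ := norm_le_pi_norm _ j
          _ ≤ ‖Ahat (w k)‖ := norm_snd_le _
      · push_neg at hcase
        calc C + ‖zs‖ < ‖E.mulVec (w k)‖ := hcase
          _ = ‖(Ahat (w k)).1‖ := by rw [hA1]
          _ ≤ ‖Ahat (w k)‖ := norm_fst_le _
    have := norm_sub_norm_le (Ahat (w k)) zs
    linarith [abs_le.1 (abs_norm_sub_norm_le (Ahat (w k)) zs)]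
  -- choose a sequence going to infinity
  choose κ hκ using fun l : ℕ => hfar (l + 1 : ℝ)
  set τ : ℕ → ℝ := fun l => ‖Ahat (w (κ l)) - zs‖ with hτ
  have hτpos : ∀ l, 0 < τ l := fun l => lt_of_le_of_lt (by positivity) (hκ l)
  have hτbig : ∀ l : ℕ, (l : ℝ) + 1 < τ l := fun l => hκ l
  set u : ℕ → (Fin m → ℝ) × (Fin n → ℝ) :=
    fun l => (τ l)⁻¹ • (Ahat (w (κ l)) - zs) with hu
  have husph : ∀ l, u l ∈ Metric.sphere (0 : (Fin m → ℝ) × (Fin n → ℝ)) 1 := by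
    intro l
    rw [mem_sphere_zero_iff_norm, hu, norm_smul, Real.norm_eq_abs,
      abs_of_pos (inv_pos.2 (hτpos l))]
    show (τ l)⁻¹ * ‖Ahat (w (κ l)) - zs‖ = 1
    have hτl : τ l = ‖Ahat (w (κ l)) - zs‖ := rfl
    rw [← hτl]
    exact inv_mul_cancel₀ (ne_of_gt (hτpos l))
  obtain ⟨zhat, hzhatsph, φ, hφmono, hφlim⟩ :=
    (isCompact_sphere (0 : (Fin m → ℝ) × (Fin n → ℝ)) 1).tendsto_subseq husph
  have hzhatnorm : ‖zhat‖ = 1 := mem_sphere_zero_iff_norm.1 hzhatsph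
  set K : ℕ → ℕ := fun l => κ (φ l) with hK
  set τ' : ℕ → ℝ := fun l => τ (φ l) with hτ'
  have hτ'pos : ∀ l, 0 < τ' l := fun l => hτpos _
  have hτ'atTop : Tendsto τ' atTop atTop := by
    apply tendsto_atTop_mono (fun l => le_of_lt (hτbig (φ l)))
    apply tendsto_atTop_mono (fun l => by exact_mod_cast Nat.succ_le_succ (hφmono.le_apply) : ∀ l : ℕ, (l:ℝ)+1 ≤ (φ l : ℝ)+1)
    exact tendsto_atTop_add_const_right _ 1 tendsto_natCast_atTop_atTop
  set uh : ℕ → (Fin m → ℝ) × (Fin n → ℝ) := fun l => u (φ l) with huh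
  have huhlim : Tendsto uh atTop (𝓝 zhat) := hφlim
  have huheq : ∀ l, uh l = (τ' l)⁻¹ • (Ahat (w (K l)) - zs) := fun l => rfl
  -- the cone Q is closed and zhat ∈ Q
  set Q : Set ((Fin m → ℝ) × (Fin n → ℝ)) :=
    {z | ∃ v : Fin n → ℝ, (∀ j ∉ S, 0 ≤ v j) ∧ Ahat v = z} with hQ
  have hsingle : ∀ c : Fin n → ℝ, ∑ j, c j • (Pi.single j 1 : Fin n → ℝ) = c := by
    intro c
    funext j
    rw [Finset.sum_apply]
    have : ∀ i : Fin n, (c i • (Pi.single i 1 : Fin n → ℝ)) j = if i = j then c i else 0 := by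
      intro i
      by_cases h : i = j
      · subst h; simp
      · simp [Pi.single_apply, h]
    rw [Finset.sum_congr rfl (fun i _ => this i)]
    simp
  have hQclosed : IsClosed Q := by
    set W : (Fin n ⊕ Fin n) → (Fin m → ℝ) × (Fin n → ℝ) := fun i =>
      Sum.elim (fun j => Ahat (Pi.single j 1 : Fin n → ℝ))
        (fun j => if j ∈ S then -Ahat (Pi.single j 1 : Fin n → ℝ) else 0) i with hW
    have hQeq : Q = {z | ∃ a : (Fin n ⊕ Fin n) → ℝ, (∀ i, 0 ≤ a i) ∧
        ∑ i ∈ Finset.univ, a i • W i = z} := by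
      ext z
      constructor
      · rintro ⟨v, hv, rfl⟩
        refine ⟨Sum.elim (fun j => if j ∈ S then max (v j) 0 else v j)
          (fun j => if j ∈ S then max (-v j) 0 else 0), ?_, ?_⟩
        · rintro (j | j)
          · by_cases h : j ∈ S
            · simp [h, le_max_right]
            · simp [h]; exact hv j h
          · by_cases h : j ∈ S <;> simp [h, le_max_right]
        · rw [Fintype.sum_sum_type]
          have h1 : ∀ j : Fin n, (Sum.elim (fun j => if j ∈ S then max (v j) 0 else v j)
              (fun j => if j ∈ S then max (-v j) 0 else 0) (Sum.inl j)) • W (Sum.inl j)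
              = Ahat ((if j ∈ S then max (v j) 0 else v j) • (Pi.single j 1 : Fin n → ℝ)) := by
            intro j; rw [hW]; by_cases h : j ∈ S <;> simp [h, _root_.map_smul]
          have h2 : ∀ j : Fin n, (Sum.elim (fun j => if j ∈ S then max (v j) 0 else v j)
              (fun j => if j ∈ S then max (-v j) 0 else 0) (Sum.inr j)) • W (Sum.inr j)
              = Ahat ((if j ∈ S then -(max (-v j) 0) else 0) • (Pi.single j 1 : Fin n → ℝ)) := by
            intro j
            rw [hW]
            by_cases h : j ∈ S <;> simp [h, _root_.map_smul, smul_smul, neg_smul, _root_.map_neg]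
          rw [Finset.sum_congr rfl (fun j _ => h1 j), Finset.sum_congr rfl (fun j _ => h2 j),
            ← _root_.map_sum, ← _root_.map_sum, ← _root_.map_add]
          congr 1
          rw [← Finset.sum_add_distrib]
          have h3 : ∀ j : Fin n, (if j ∈ S then max (v j) 0 else v j) • (Pi.single j 1 : Fin n → ℝ)
              + (if j ∈ S then -(max (-v j) 0) else 0) • (Pi.single j 1 : Fin n → ℝ)
              = v j • (Pi.single j 1 : Fin n → ℝ) := by
            intro j
            rw [← add_smul]
            congr 1
            by_cases h : j ∈ S
            · simp only [if_pos h]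
              rcases le_or_gt 0 (v j) with hv' | hv'
              · rw [max_eq_left hv', max_eq_right (by linarith)]; ring
              · rw [max_eq_right (by linarith), max_eq_left (by linarith)]; ring
            · simp [h]
          rw [Finset.sum_congr rfl (fun j _ => h3 j), hsingle]
      · rintro ⟨a, ha, rfl⟩
        refine ⟨fun j => a (Sum.inl j) + (if j ∈ S then -(a (Sum.inr j)) else 0), ?_, ?_⟩
        · intro j hj
          simp [hj]
          exact ha (Sum.inl j)
        · rw [Fintype.sum_sum_type]
          have h1 : ∀ j : Fin n, a (Sum.inl j) • W (Sum.inl j)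
              = Ahat (a (Sum.inl j) • (Pi.single j 1 : Fin n → ℝ)) := by
            intro j; rw [hW]; by_cases h : j ∈ S <;> simp [h, _root_.map_smul]
          have h2 : ∀ j : Fin n, a (Sum.inr j) • W (Sum.inr j)
              = Ahat ((if j ∈ S then -(a (Sum.inr j)) else 0) • (Pi.single j 1 : Fin n → ℝ)) := by
            intro j
            rw [hW]
            by_cases h : j ∈ S <;> simp [h, _root_.map_smul, smul_smul, neg_smul, _root_.map_neg]
          rw [Finset.sum_congr rfl (fun j _ => h1 j), Finset.sum_congr rfl (fun j _ => h2 j),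
            ← _root_.map_sum, ← _root_.map_sum, ← _root_.map_add]
          congr 1
          rw [← Finset.sum_add_distrib]
          have h3 : ∀ j : Fin n, a (Sum.inl j) • (Pi.single j 1 : Fin n → ℝ)
              + (if j ∈ S then -(a (Sum.inr j)) else 0) • (Pi.single j 1 : Fin n → ℝ)
              = (a (Sum.inl j) + (if j ∈ S then -(a (Sum.inr j)) else 0)) • (Pi.single j 1 : Fin n → ℝ) := by
            intro j; rw [← add_smul]
          rw [Finset.sum_congr rfl (fun j _ => h3 j), hsingle]
    rw [hQeq]
    exact isClosed_nonnegSpan W Finset.univ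
  -- zhat ∈ Q via clipping
  have hzhatQ : zhat ∈ Q := by
    set raw : ℕ → Fin n → ℝ := fun l => (τ' l)⁻¹ • (w (K l) - xs) with hraw
    have hAraw : ∀ l, Ahat (raw l) = uh l := by
      intro l
      rw [hraw, huheq]
      rw [_root_.map_smul, _root_.map_sub]
    set v' : ℕ → Fin n → ℝ := fun l j => if j ∈ S then raw l j else max (raw l j) 0 with hv'
    have hv'K : ∀ l, ∀ j ∉ S, 0 ≤ v' l j := by
      intro l j hj; simp [hv', hj, le_max_right]
    set Acl := LinearMap.toContinuousLinearMap Ahat with hAcl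
    have hAclA : ∀ v, Acl v = Ahat v := fun v => rfl
    have hdiffsmall : ∀ l, ‖v' l - raw l‖ ≤ ‖xs‖ * (τ' l)⁻¹ := by
      intro l
      have hcoord : ∀ j, ‖(v' l - raw l) j‖ ≤ ‖xs‖ * (τ' l)⁻¹ := by
        intro j
        rw [Pi.sub_apply]
        by_cases hj : j ∈ S
        · simp [hv', hj, norm_nonneg, inv_nonneg]
          positivity
        · simp only [hv', if_neg hj]
          rw [Real.norm_eq_abs]
          have hwj : 0 ≤ w (K l) j := (hX ▸ hwX (K l)) j hj
          have hxsj : 0 ≤ xs j := (hX ▸ hxsX) j hj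
          have hrawlb : -((τ' l)⁻¹ * xs j) ≤ raw l j := by
            rw [hraw]
            simp only [Pi.smul_apply, Pi.sub_apply, smul_eq_mul]
            have := mul_le_mul_of_nonneg_left (by linarith : -xs j ≤ w (K l) j - xs j)
              (le_of_lt (inv_pos.2 (hτ'pos l)))
            linarith [this]
          have hub : max (raw l j) 0 - raw l j ≤ (τ' l)⁻¹ * xs j := by
            rcases le_or_gt 0 (raw l j) with h | h
            · rw [max_eq_left h]
              simp
              positivity
            · rw [max_eq_right (le_of_lt h)]
              have : (0:ℝ) ≤ (τ' l)⁻¹ * xs j := by positivity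
              linarith [hrawlb]
          have hlb : 0 ≤ max (raw l j) 0 - raw l j := by
            rcases le_or_gt 0 (raw l j) with h | h
            · rw [max_eq_left h]; simp
            · rw [max_eq_right (le_of_lt h)]; linarith
          rw [abs_of_nonneg hlb]
          calc max (raw l j) 0 - raw l j ≤ (τ' l)⁻¹ * xs j := hub
            _ ≤ (τ' l)⁻¹ * ‖xs‖ := by
                apply mul_le_mul_of_nonneg_left _ (le_of_lt (inv_pos.2 (hτ'pos l)))
                calc xs j ≤ |xs j| := le_abs_self _
                  _ ≤ ‖xs‖ := norm_le_pi_norm xs j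
            _ = ‖xs‖ * (τ' l)⁻¹ := by ring
      have h0 : (0:ℝ) ≤ ‖xs‖ * (τ' l)⁻¹ := by positivity
      exact (pi_norm_le_iff_of_nonneg h0).2 hcoord
    have hAv'lim : Tendsto (fun l => Ahat (v' l)) atTop (𝓝 zhat) := by
      have hAdiff : Tendsto (fun l => Ahat (v' l) - uh l) atTop (𝓝 0) := by
        rw [tendsto_zero_iff_norm_tendsto_zero]
        have hb : ∀ l, ‖Ahat (v' l) - uh l‖ ≤ ‖Acl‖ * (‖xs‖ * (τ' l)⁻¹) := by
          intro l
          rw [← hAraw l, ← hAclA, ← hAclA, ← map_sub]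
          calc ‖Acl (v' l - raw l)‖ ≤ ‖Acl‖ * ‖v' l - raw l‖ := Acl.le_opNorm _
            _ ≤ ‖Acl‖ * (‖xs‖ * (τ' l)⁻¹) := by
                apply mul_le_mul_of_nonneg_left (hdiffsmall l) (norm_nonneg _)
        have hlim0 : Tendsto (fun l => ‖Acl‖ * (‖xs‖ * (τ' l)⁻¹)) atTop (𝓝 0) := by
          have h1 : Tendsto (fun l => (τ' l)⁻¹) atTop (𝓝 0) := hτ'atTop.inv_tendsto_atTop
          have h2 := h1.const_mul (‖Acl‖ * ‖xs‖)
          rw [mul_zero] at h2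
          exact h2.congr (fun l => by ring)
        exact squeeze_zero (fun l => norm_nonneg _) hb hlim0
      have := hAdiff.add huhlim
      simpa using this
    have hmem : ∀ l, Ahat (v' l) ∈ Q := fun l => ⟨v' l, hv'K l, rfl⟩
    exact hQclosed.mem_of_tendsto hAv'lim (Eventually.of_forall hmem)
  obtain ⟨v, hvK, hAv⟩ := hzhatQ
  -- ray facts
  have hgh_nonneg_part : ∀ z : (Fin m → ℝ) × (Fin n → ℝ), gr z.1 ≤ gh z := by
    intro z
    show gr z.1 ≤ gr z.1 + lam * ∑ j ∈ S, |z.2 j|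
    have : 0 ≤ lam * ∑ j ∈ S, |z.2 j| := by
      apply mul_nonneg (le_of_lt hlam)
      exact Finset.sum_nonneg (fun j _ => abs_nonneg _)
    linarith
  have habs_combo : ∀ (a b : ℝ) (z1 z2 : (Fin m → ℝ) × (Fin n → ℝ)), 0 ≤ a → 0 ≤ b →
      lam * ∑ j ∈ S, |(a • z1 + b • z2).2 j| ≤
        a * (lam * ∑ j ∈ S, |z1.2 j|) + b * (lam * ∑ j ∈ S, |z2.2 j|) := by
    intro a b z1 z2 ha hb
    have h1 : ∑ j ∈ S, |(a • z1 + b • z2).2 j| ≤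
        a * ∑ j ∈ S, |z1.2 j| + b * ∑ j ∈ S, |z2.2 j| := by
      rw [Finset.mul_sum, Finset.mul_sum, ← Finset.sum_add_distrib]
      apply Finset.sum_le_sum
      intro j _
      have : (a • z1 + b • z2).2 j = a * z1.2 j + b * z2.2 j := rfl
      rw [this]
      calc |a * z1.2 j + b * z2.2 j| ≤ |a * z1.2 j| + |b * z2.2 j| := abs_add_le _ _
        _ = a * |z1.2 j| + b * |z2.2 j| := by
            rw [abs_mul, abs_mul, abs_of_nonneg ha, abs_of_nonneg hb]
    nlinarith [h1]
  have htstarDg : tstar ∈ Dg := hts ▸ hxsDg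
  have hray : ∀ σ : ℝ, 0 ≤ σ → ((zs + σ • zhat).1 ∈ Dg ∧ gh (zs + σ • zhat) ≤ M1) := by
    intro σ hσ
    obtain ⟨l₀, hl₀⟩ := eventually_atTop.1 (hτ'atTop.eventually_ge_atTop σ)
    set q : ℕ → (Fin m → ℝ) × (Fin n → ℝ) := fun l => zs + σ • uh (l + l₀) with hq
    have hqcombo : ∀ l, q l = (1 - σ / τ' (l + l₀)) • zs
        + (σ / τ' (l + l₀)) • Ahat (w (K (l + l₀))) := by
      intro l
      rw [hq]
      simp only []
      rw [huheq, smul_smul, ← div_eq_mul_inv, smul_sub, sub_smul, one_smul]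
      abel
    have hθ1 : ∀ l, 0 ≤ σ / τ' (l + l₀) := fun l => div_nonneg hσ (le_of_lt (hτ'pos _))
    have hθ2 : ∀ l, σ / τ' (l + l₀) ≤ 1 := by
      intro l
      rw [div_le_one (hτ'pos _)]
      exact hl₀ (l + l₀) (Nat.le_add_left _ _)
    have hq1Dg : ∀ l, (q l).1 ∈ Dg := by
      intro l
      rw [hqcombo]
      have : ((1 - σ / τ' (l + l₀)) • zs + (σ / τ' (l + l₀)) • Ahat (w (K (l + l₀)))).1
          = (1 - σ / τ' (l + l₀)) • zs.1 + (σ / τ' (l + l₀)) • (Ahat (w (K (l + l₀)))).1 := rfl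
      rw [this, hzs1, hA1]
      exact hDg htstarDg (hwDg _) (by linarith [hθ2 l]) (hθ1 l) (by ring)
    have hghq : ∀ l, gh (q l) ≤ M1 := by
      intro l
      rw [hqcombo]
      set a := 1 - σ / τ' (l + l₀) with hadef
      set b' := σ / τ' (l + l₀) with hbdef
      have ha : 0 ≤ a := by rw [hadef]; linarith [hθ2 l]
      have hb : 0 ≤ b' := hθ1 l
      have hab : a + b' = 1 := by rw [hadef, hbdef]; ring
      have hfst : (a • zs + b' • Ahat (w (K (l + l₀)))).1
          = a • zs.1 + b' • (Ahat (w (K (l + l₀)))).1 := rfl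
      have hgr : gr ((a • zs + b' • Ahat (w (K (l + l₀)))).1)
          ≤ a * gr zs.1 + b' * gr (Ahat (w (K (l + l₀)))).1 := by
        rw [hfst]
        exact hgconv.2 (hzs1 ▸ htstarDg) (hA1 _ ▸ hwDg _) ha hb hab
      have habs := habs_combo a b' zs (Ahat (w (K (l + l₀)))) ha hb
      have hcomb : gh (a • zs + b' • Ahat (w (K (l + l₀))))
          ≤ a * gh zs + b' * gh (Ahat (w (K (l + l₀)))) := by
        rw [hgh]
        simp only []
        have e1 : a * (gr zs.1 + lam * ∑ j ∈ S, |zs.2 j|)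
            + b' * (gr (Ahat (w (K (l + l₀)))).1 + lam * ∑ j ∈ S, |(Ahat (w (K (l + l₀)))).2 j|)
            = (a * gr zs.1 + b' * gr (Ahat (w (K (l + l₀)))).1)
              + (a * (lam * ∑ j ∈ S, |zs.2 j|)
                + b' * (lam * ∑ j ∈ S, |(Ahat (w (K (l + l₀)))).2 j|)) := by ring
        rw [e1]
        exact add_le_add hgr habs
      have hghzs : gh zs = F xs := hghF xs
      have hghw : gh (Ahat (w (K (l + l₀)))) = F (w (K (l + l₀))) := hghF _
      rw [hghzs, hghw] at hcomb
      have hFxsM1 : F xs ≤ M1 := le_max_left _ _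
      have hFwM1 : F (w (K (l + l₀))) ≤ M1 := le_trans (hwF _) (le_max_right _ _)
      have hsum1 : a * M1 + b' * M1 = M1 := by rw [← add_mul, hab, one_mul]
      nlinarith [mul_le_mul_of_nonneg_left hFxsM1 ha, mul_le_mul_of_nonneg_left hFwM1 hb]
    have hqlim : Tendsto q atTop (𝓝 (zs + σ • zhat)) := by
      have h1 : Tendsto (fun l => uh (l + l₀)) atTop (𝓝 zhat) :=
        huhlim.comp (tendsto_add_atTop_nat l₀)
      have := (h1.const_smul σ).const_add zs
      exact this
    have hq1lim : Tendsto (fun l => (q l).1) atTop (𝓝 ((zs + σ • zhat).1)) :=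
      (continuous_fst.tendsto _).comp hqlim
    have hgrbound : ∀ l, gr ((q l).1) ≤ M1 := fun l =>
      le_trans (hgh_nonneg_part (q l)) (hghq l)
    have hmem1 : (zs + σ • zhat).1 ∈ Dg :=
      hmemlim M1 (fun l => (q l).1) _ hq1Dg hgrbound hq1lim
    refine ⟨hmem1, ?_⟩
    have hghlim : Tendsto (fun l => gh (q l)) atTop (𝓝 (gh (zs + σ • zhat))) := by
      rw [hgh]
      simp only []
      apply Tendsto.add
      · exact ((hgcont.continuousAt (hO.mem_nhds hmem1)).tendsto).comp hq1lim
      · apply Tendsto.const_mul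
        apply tendsto_finset_sum
        intro j _
        have hco : Tendsto (fun l => (q l).2 j) atTop (𝓝 ((zs + σ • zhat).2 j)) :=
          ((continuous_apply j).tendsto _).comp ((continuous_snd.tendsto _).comp hqlim)
        exact (continuous_abs.tendsto _).comp hco
    exact le_of_tendsto hghlim (Eventually.of_forall hghq)
  -- identify the ray with a feasible ray
  have hident : ∀ σ : ℝ, zs + σ • zhat = Ahat (xs + σ • v) := by
    intro σ
    rw [map_add, _root_.map_smul, hAv]
  have hfeasX : ∀ σ : ℝ, 0 ≤ σ → xs + σ • v ∈ X := by
    intro σ hσ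
    rw [hX]
    intro j hj
    have h1 : 0 ≤ xs j := (hX ▸ hxsX) j hj
    have h2 : 0 ≤ v j := hvK j hj
    have : (xs + σ • v) j = xs j + σ * v j := rfl
    rw [this]
    positivity
  have hEeq : ∀ σ : ℝ, E.mulVec (xs + σ • v) = (zs + σ • zhat).1 := by
    intro σ
    rw [hident σ, hA1]
  have hEray : ∀ σ : ℝ, 0 ≤ σ → E.mulVec (xs + σ • v) ∈ Dg := by
    intro σ hσ
    rw [hEeq]
    exact (hray σ hσ).1
  have hlow : ∀ σ : ℝ, 0 ≤ σ → F xs ≤ F (xs + σ • v) := fun σ hσ =>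
    hxsmin _ (hfeasX σ hσ) (hEray σ hσ)
  have hhconv : ConvexOn ℝ (Set.Ici (0:ℝ)) (fun σ => gh (zs + σ • zhat)) := by
    refine ⟨convex_Ici 0, ?_⟩
    intro σ1 h1 σ2 h2 a b ha hb hab
    have hkeyid : zs + (a * σ1 + b * σ2) • zhat
        = a • (zs + σ1 • zhat) + b • (zs + σ2 • zhat) := by
      have hz : a • zs + b • zs = zs := by rw [← add_smul, hab, one_smul]
      have hrhs : a • (zs + σ1 • zhat) + b • (zs + σ2 • zhat)
          = (a • zs + b • zs) + ((a * σ1) • zhat + (b * σ2) • zhat) := by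
        rw [smul_add, smul_add, smul_smul, smul_smul]
        abel
      rw [hrhs, hz, ← add_smul]
    show gh (zs + (a • σ1 + b • σ2) • zhat)
      ≤ a • gh (zs + σ1 • zhat) + b • gh (zs + σ2 • zhat)
    simp only [smul_eq_mul]
    rw [hkeyid]
    set z1 := zs + σ1 • zhat with hz1
    set z2 := zs + σ2 • zhat with hz2
    have hm1 : z1.1 ∈ Dg := (hray σ1 (Set.mem_Ici.1 h1)).1
    have hm2 : z2.1 ∈ Dg := (hray σ2 (Set.mem_Ici.1 h2)).1
    have hfst : (a • z1 + b • z2).1 = a • z1.1 + b • z2.1 := rfl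
    have hgr : gr ((a • z1 + b • z2).1) ≤ a * gr z1.1 + b * gr z2.1 := by
      rw [hfst]
      exact hgconv.2 hm1 hm2 ha hb hab
    have habs := habs_combo a b z1 z2 ha hb
    rw [hgh]
    simp only []
    have e1 : a * (gr z1.1 + lam * ∑ j ∈ S, |z1.2 j|)
        + b * (gr z2.1 + lam * ∑ j ∈ S, |z2.2 j|)
        = (a * gr z1.1 + b * gr z2.1)
          + (a * (lam * ∑ j ∈ S, |z1.2 j|) + b * (lam * ∑ j ∈ S, |z2.2 j|)) := by ring
    rw [e1]
    exact add_le_add hgr habs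
  have hnoninc : ∀ σ : ℝ, 0 ≤ σ → gh (zs + σ • zhat) ≤ gh (zs + (0:ℝ) • zhat) :=
    fun σ hσ => convexOn_nonincreasing_of_bddAbove hhconv
      (fun σ' hσ' => (hray σ' (Set.mem_Ici.1 hσ')).2) (le_refl 0) hσ
  have hconstF : ∀ σ : ℝ, 0 ≤ σ → F (xs + σ • v) = F xs := by
    intro σ hσ
    have h1 : F (xs + σ • v) = gh (zs + σ • zhat) := by rw [hident σ, hghF]
    have h2 : gh (zs + (0:ℝ) • zhat) = F xs := by
      rw [zero_smul, add_zero, hzs, hghF]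
    have h3 : F (xs + σ • v) ≤ F xs := by
      rw [h1, ← h2]
      exact hnoninc σ hσ
    exact le_antisymm h3 (hlow σ hσ)
  have hEts : ∀ σ : ℝ, 0 ≤ σ → E.mulVec (xs + σ • v) = tstar := fun σ hσ =>
    htstar2 _ (hfeasX σ hσ) (hEray σ hσ) (hconstF σ hσ)
  have hEv0 : E.mulVec v = 0 := by
    have h1 := hEts 1 zero_le_one
    rw [one_smul, Matrix.mulVec_add, hts] at h1
    have : tstar + E.mulVec v = tstar + 0 := by rw [add_zero]; exact h1
    exact add_left_cancel this
  have hzhat1 : zhat.1 = 0 := by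
    have : zhat.1 = (Ahat v).1 := by rw [hAv]
    rw [this, hA1, hEv0]
  have habs_const : ∀ σ : ℝ, 0 ≤ σ → ∑ j ∈ S, |xs j + σ * v j| = ∑ j ∈ S, |xs j| := by
    intro σ hσ
    have h1 := hconstF σ hσ
    rw [hF, hF, hEts σ hσ, hts] at h1
    have h2 : ∀ j, (xs + σ • v) j = xs j + σ * v j := fun j => rfl
    have h3 : ∑ j ∈ S, |(xs + σ • v) j| = ∑ j ∈ S, |xs j + σ * v j| :=
      Finset.sum_congr rfl (fun j _ => by rw [h2])
    rw [h3] at h1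
    have := mul_left_cancel₀ (ne_of_gt hlam) (by linarith : lam * ∑ j ∈ S, |xs j + σ * v j| = lam * ∑ j ∈ S, |xs j|)
    exact this
  have hvS : ∀ j ∈ S, v j = 0 := by
    intro j0 hj0
    by_contra hne
    have hvpos : 0 < |v j0| := abs_pos.2 hne
    set c0 := ∑ j ∈ S, |xs j| with hc0
    have hc0nn : 0 ≤ c0 := Finset.sum_nonneg (fun j _ => abs_nonneg _)
    set σ := (c0 + |xs j0| + 1) / |v j0| with hσdef
    have hσnn : 0 ≤ σ := by positivity
    have h1 : |xs j0 + σ * v j0| ≤ c0 := by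
      rw [← habs_const σ hσnn]
      exact Finset.single_le_sum (f := fun j => |xs j + σ * v j|)
        (fun j _ => abs_nonneg _) hj0
    have h2 : σ * |v j0| = c0 + |xs j0| + 1 := by
      rw [hσdef]
      field_simp
    have h3 : |σ * v j0| - |xs j0| ≤ |xs j0 + σ * v j0| := by
      have := abs_add_le (xs j0) (σ * v j0)
      have h4 := abs_sub_abs_le_abs_sub (σ * v j0) (-(xs j0))
      calc |σ * v j0| - |xs j0| = |σ * v j0| - |-(xs j0)| := by rw [abs_neg]
        _ ≤ |σ * v j0 - -(xs j0)| := h4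
        _ = |xs j0 + σ * v j0| := by congr 1; ring
    rw [abs_mul, abs_of_nonneg hσnn, h2] at h3
    linarith
  have hzhat2 : zhat.2 = 0 := by
    have h1 : zhat.2 = (Ahat v).2 := by rw [hAv]
    rw [h1, hA2]
    funext j
    by_cases hj : j ∈ S
    · simp [hj, hvS j hj]
    · simp [hj]
  have hzhat0 : zhat = 0 := by
    have : zhat = (zhat.1, zhat.2) := rfl
    rw [this, hzhat1, hzhat2]
    rfl
  rw [hzhat0] at hzhatnorm
  simp at hzhatnorm


set_option maxHeartbeats 1000000 in
lemma cluster_le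
    {m n : ℕ} {S : Finset (Fin n)} {lam : ℝ} (hlam : 0 < lam)
    {E : Matrix (Fin m) (Fin n) ℝ} {Dg : Set (Fin m → ℝ)} {gr : (Fin m → ℝ) → ℝ}
    (hO : IsOpen Dg) (hDg : Convex ℝ Dg)
    (hgcont : ContinuousOn gr Dg)
    (hgradcont : ContinuousOn (fderiv ℝ gr) Dg)
    (hgradineq : ∀ a ∈ Dg, ∀ b ∈ Dg, gr a + fderiv ℝ gr a (b - a) ≤ gr b)
    (hstrict : ∀ a ∈ Dg, ∀ b ∈ Dg, a ≠ b → gr ((1/2:ℝ) • (a + b)) < (gr a + gr b)/2)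
    (hmemlim : ∀ (C : ℝ) (p : ℕ → Fin m → ℝ) (q : Fin m → ℝ), (∀ k, p k ∈ Dg) →
        (∀ k, gr (p k) ≤ C) → Tendsto p atTop (𝓝 q) → q ∈ Dg)
    {X : Set (Fin n → ℝ)} (hX : X = {x | ∀ i ∉ S, 0 ≤ x i})
    {F : (Fin n → ℝ) → ℝ} (hF : ∀ x, F x = gr (E.mulVec x) + lam * ∑ i ∈ S, |x i|)
    {xs : Fin n → ℝ} (hxsX : xs ∈ X) (hxsDg : E.mulVec xs ∈ Dg)
    (t : ℕ → ℕ → Fin m → ℝ)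
    (htDg : ∀ r i, i ≤ n → t r i ∈ Dg)
    {M0 C : ℝ}
    (hgb : ∀ r i, i ≤ n → gr (t r i) ≤ M0)
    (htb : ∀ r i, i ≤ n → ‖t r i‖ ≤ C)
    (p : ℕ → Fin n → ℝ)
    (hpX : ∀ r, p r ∈ X)
    (hpt : ∀ r, E.mulVec (p r) = t r n)
    (hpb : ∀ r, ∀ j ∈ S, |p r j| ≤ C)
    (hkkt : ∀ r, ∀ i : Fin n,
       (i ∈ S → |fderiv ℝ gr (t r ((i:ℕ)+1)) (fun k => E k i)| ≤ lam ∧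
          fderiv ℝ gr (t r ((i:ℕ)+1)) (fun k => E k i) * p r i = -(lam * |p r i|)) ∧
       (i ∉ S → 0 ≤ fderiv ℝ gr (t r ((i:ℕ)+1)) (fun k => E k i) ∧
          fderiv ℝ gr (t r ((i:ℕ)+1)) (fun k => E k i) * p r i = 0))
    (hgap : ∀ i, i < n → Tendsto (fun r => (gr (t r i) + gr (t r (i+1)))/2
        - gr ((1/2 : ℝ) • (t r i + t r (i+1)))) atTop (𝓝 0))
    {L : ℝ} (hΦlim : Tendsto (fun r => F (p r)) atTop (𝓝 L)) :
    L ≤ F xs := by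
  classical
  set col : Fin n → Fin m → ℝ := fun i k => E k i with hcol
  set G : ℕ → (Fin m → ℝ) →L[ℝ] ℝ := fun r => fderiv ℝ gr (t r n) with hG
  set B : ℕ → Fin n → ℝ := fun r i => fderiv ℝ gr (t r ((i:ℕ)+1)) (col i) with hB
  -- expansion of mulVec
  have hmv : ∀ v : Fin n → ℝ, E.mulVec v = ∑ i, v i • col i := by
    intro v
    funext k
    rw [Finset.sum_apply]
    simp only [Pi.smul_apply, smul_eq_mul, hcol]
    rw [Matrix.mulVec, dotProduct]
    exact Finset.sum_congr rfl (fun i _ => mul_comm _ _)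
  have hlin : ∀ (Φ : (Fin m → ℝ) →L[ℝ] ℝ) (v : Fin n → ℝ),
      Φ (E.mulVec v) = ∑ i, v i * Φ (col i) := by
    intro Φ v
    rw [hmv, map_sum]
    exact Finset.sum_congr rfl (fun i _ => by rw [_root_.map_smul]; rfl)
  -- main inequality
  have hxsnn : ∀ i ∉ S, 0 ≤ xs i := by rw [hX] at hxsX; exact hxsX
  have hmain : ∀ r, F (p r) + ∑ i : Fin n, (G r (col i) - B r i) * (xs i - p r i) ≤ F xs := by
    intro r
    have h1 : gr (t r n) + G r (E.mulVec xs - t r n) ≤ gr (E.mulVec xs) :=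
      hgradineq (t r n) (htDg r n le_rfl) (E.mulVec xs) hxsDg
    have h2 : E.mulVec xs - t r n = E.mulVec (xs - p r) := by
      rw [Matrix.mulVec_sub, hpt]
    have h3 : G r (E.mulVec xs - t r n) = ∑ i, (xs i - p r i) * G r (col i) := by
      rw [h2, hlin]
      exact Finset.sum_congr rfl (fun i _ => by rw [Pi.sub_apply])
    -- bracket nonnegativity
    have hbr : ∀ i : Fin n,
        0 ≤ B r i * (xs i - p r i) + (if i ∈ S then lam * (|xs i| - |p r i|) else 0) := by
      intro i
      by_cases hiS : i ∈ S
      · obtain ⟨habs, hcompl⟩ := (hkkt r i).1 hiS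
        rw [if_pos hiS]
        have h4 : -(lam * |xs i|) ≤ B r i * xs i := by
          have h5 : |B r i * xs i| ≤ lam * |xs i| := by
            rw [abs_mul]
            exact mul_le_mul_of_nonneg_right habs (abs_nonneg _)
          linarith [neg_abs_le (B r i * xs i)]
        have h6 : B r i * p r i = -(lam * |p r i|) := hcompl
        nlinarith
      · obtain ⟨hBnn, hcompl⟩ := (hkkt r i).2 hiS
        rw [if_neg hiS]
        have h7 : 0 ≤ xs i := hxsnn i hiS
        have h8 : B r i * (xs i - p r i) = B r i * xs i - B r i * p r i := by ring
        rw [h8, hcompl, add_zero, sub_zero]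
        exact mul_nonneg hBnn h7
    have hFxs : F xs = gr (E.mulVec xs) + lam * ∑ i ∈ S, |xs i| := hF xs
    have hFp : F (p r) = gr (t r n) + lam * ∑ i ∈ S, |p r i| := by
      rw [hF, hpt]
    have hsumS : lam * (∑ i ∈ S, |xs i|) - lam * (∑ i ∈ S, |p r i|)
        = ∑ i : Fin n, (if i ∈ S then lam * (|xs i| - |p r i|) else 0) := by
      rw [Finset.sum_ite_mem, Finset.univ_inter]
      rw [Finset.mul_sum, Finset.mul_sum, ← Finset.sum_sub_distrib]
      exact Finset.sum_congr rfl (fun i _ => by ring)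
    have hsplit : ∑ i : Fin n, (xs i - p r i) * G r (col i)
        = (∑ i : Fin n, (G r (col i) - B r i) * (xs i - p r i))
          + ∑ i : Fin n, B r i * (xs i - p r i) := by
      rw [← Finset.sum_add_distrib]
      exact Finset.sum_congr rfl (fun i _ => by ring)
    have hbrsum : 0 ≤ ∑ i : Fin n, (B r i * (xs i - p r i)
        + (if i ∈ S then lam * (|xs i| - |p r i|) else 0)) :=
      Finset.sum_nonneg (fun i _ => hbr i)
    rw [Finset.sum_add_distrib] at hbrsum
    -- assemble
    have hassemble : F (p r) + ∑ i : Fin n, (G r (col i) - B r i) * (xs i - p r i)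
        ≤ gr (t r n) + G r (E.mulVec xs - t r n) + lam * ∑ i ∈ S, |xs i| := by
      rw [h3, hsplit] at *
      have e1 : gr (t r n) + ((∑ i : Fin n, (G r (col i) - B r i) * (xs i - p r i))
          + ∑ i : Fin n, B r i * (xs i - p r i)) + lam * ∑ i ∈ S, |xs i|
          = F (p r) + (∑ i : Fin n, (G r (col i) - B r i) * (xs i - p r i))
            + (∑ i : Fin n, B r i * (xs i - p r i)
              + (lam * (∑ i ∈ S, |xs i|) - lam * (∑ i ∈ S, |p r i|))) := by
        rw [hFp]; ring
      rw [e1, hsumS]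
      linarith
    calc F (p r) + ∑ i : Fin n, (G r (col i) - B r i) * (xs i - p r i)
        ≤ gr (t r n) + G r (E.mulVec xs - t r n) + lam * ∑ i ∈ S, |xs i| := hassemble
      _ ≤ gr (E.mulVec xs) + lam * ∑ i ∈ S, |xs i| := by linarith
      _ = F xs := hFxs.symm
  -- extract a convergent subsequence of the t's
  have hC0 : (0:ℝ) ≤ C := le_trans (norm_nonneg _) (htb 0 0 (Nat.zero_le n))
  set TT : ℕ → (Fin (n+1) → Fin m → ℝ) := fun r i => t r i with hTT
  have hTTmem : ∀ r, TT r ∈ Metric.closedBall (0 : Fin (n+1) → Fin m → ℝ) C := by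
    intro r
    rw [Metric.mem_closedBall, dist_zero_right]
    refine (pi_norm_le_iff_of_nonneg hC0).2 (fun i => ?_)
    exact htb r i (Nat.lt_succ_iff.1 i.isLt)
  obtain ⟨Tbar, hTbarmem, φ, hφ, hTlim⟩ :=
    (isCompact_closedBall (0 : Fin (n+1) → Fin m → ℝ) C).tendsto_subseq hTTmem
  have hφat : Tendsto φ atTop atTop := hφ.tendsto_atTop
  have hlimti : ∀ i : Fin (n+1), Tendsto (fun l => t (φ l) i) atTop (𝓝 (Tbar i)) := by
    intro i
    have := (tendsto_pi_nhds.1 hTlim) i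
    exact this
  have hTbarDg : ∀ i : Fin (n+1), Tbar i ∈ Dg := by
    intro i
    have hle : (i : ℕ) ≤ n := Nat.lt_succ_iff.1 i.isLt
    exact hmemlim M0 (fun l => t (φ l) i) (Tbar i)
      (fun l => htDg (φ l) i hle) (fun l => hgb (φ l) i hle) (hlimti i)
  -- all the Tbar's coincide
  have hstep : ∀ i : ℕ, (h : i < n) → Tbar ⟨i, Nat.lt_succ_of_lt h⟩
      = Tbar ⟨i+1, Nat.succ_lt_succ h⟩ := by
    intro i hi
    set a := Tbar ⟨i, Nat.lt_succ_of_lt hi⟩ with ha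
    set b := Tbar ⟨i+1, Nat.succ_lt_succ hi⟩ with hb
    have hla : Tendsto (fun l => t (φ l) i) atTop (𝓝 a) := hlimti ⟨i, Nat.lt_succ_of_lt hi⟩
    have hlb : Tendsto (fun l => t (φ l) (i+1)) atTop (𝓝 b) := hlimti ⟨i+1, Nat.succ_lt_succ hi⟩
    have haDg : a ∈ Dg := hTbarDg _
    have hbDg : b ∈ Dg := hTbarDg _
    by_contra hne
    -- the gap converges to both 0 and the positive strict-convexity gap
    have hmidDg : (1/2 : ℝ) • (a + b) ∈ Dg := by
      have := hDg haDg hbDg (by norm_num : (0:ℝ) ≤ 1/2) (by norm_num : (0:ℝ) ≤ 1/2)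
        (by norm_num)
      simpa [smul_add] using this
    have hgapφ : Tendsto (fun l => (gr (t (φ l) i) + gr (t (φ l) (i+1)))/2
        - gr ((1/2 : ℝ) • (t (φ l) i + t (φ l) (i+1)))) atTop (𝓝 0) :=
      (hgap i hi).comp hφat
    have hgap2 : Tendsto (fun l => (gr (t (φ l) i) + gr (t (φ l) (i+1)))/2
        - gr ((1/2 : ℝ) • (t (φ l) i + t (φ l) (i+1)))) atTop
        (𝓝 ((gr a + gr b)/2 - gr ((1/2 : ℝ) • (a + b)))) := by
      have hga : Tendsto (fun l => gr (t (φ l) i)) atTop (𝓝 (gr a)) :=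
        ((hgcont.continuousAt (hO.mem_nhds haDg)).tendsto).comp hla
      have hgb' : Tendsto (fun l => gr (t (φ l) (i+1))) atTop (𝓝 (gr b)) :=
        ((hgcont.continuousAt (hO.mem_nhds hbDg)).tendsto).comp hlb
      have hmid : Tendsto (fun l => (1/2 : ℝ) • (t (φ l) i + t (φ l) (i+1))) atTop
          (𝓝 ((1/2 : ℝ) • (a + b))) := (hla.add hlb).const_smul _
      have hgmid : Tendsto (fun l => gr ((1/2 : ℝ) • (t (φ l) i + t (φ l) (i+1)))) atTop
          (𝓝 (gr ((1/2 : ℝ) • (a + b)))) :=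
        ((hgcont.continuousAt (hO.mem_nhds hmidDg)).tendsto).comp hmid
      exact ((hga.add hgb').div_const 2).sub hgmid
    have heq0 : (gr a + gr b)/2 - gr ((1/2 : ℝ) • (a + b)) = 0 :=
      tendsto_nhds_unique hgap2 hgapφ
    have := hstrict a haDg b hbDg hne
    linarith
  have hchain : ∀ i : ℕ, (h : i ≤ n) → Tbar ⟨i, Nat.lt_succ_of_le h⟩
      = Tbar ⟨0, Nat.succ_pos n⟩ := by
    intro i
    induction i with
    | zero => intro h; rfl
    | succ i ih =>
      intro h
      have hi : i < n := h
      rw [← hstep i hi]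
      exact ih (le_of_lt hi)
  set tb := Tbar ⟨n, Nat.lt_succ_self n⟩ with htbdef
  have htbDg : tb ∈ Dg := hTbarDg _
  have hTbareq : ∀ i : ℕ, (h : i ≤ n) → Tbar ⟨i, Nat.lt_succ_of_le h⟩ = tb := by
    intro i h
    rw [hchain i h, htbdef, ← hchain n le_rfl]
  -- limits of gradients
  set Gbar := fderiv ℝ gr tb with hGbar
  have hGlim : Tendsto (fun l => G (φ l)) atTop (𝓝 Gbar) := by
    have h1 : Tendsto (fun l => t (φ l) n) atTop (𝓝 tb) := by
      have := hlimti ⟨n, Nat.lt_succ_self n⟩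
      rwa [hTbareq n le_rfl] at this
    exact ((hgradcont.continuousAt (hO.mem_nhds htbDg)).tendsto).comp h1
  have hBlim : ∀ i : Fin n, Tendsto (fun l => fderiv ℝ gr (t (φ l) ((i:ℕ)+1))) atTop
      (𝓝 Gbar) := by
    intro i
    have hle : (i:ℕ)+1 ≤ n := i.isLt
    have h1 : Tendsto (fun l => t (φ l) ((i:ℕ)+1)) atTop (𝓝 tb) := by
      have := hlimti ⟨(i:ℕ)+1, Nat.lt_succ_of_le hle⟩
      rwa [hTbareq ((i:ℕ)+1) hle] at this
    exact ((hgradcont.continuousAt (hO.mem_nhds htbDg)).tendsto).comp h1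
  have hGcol : ∀ i : Fin n, Tendsto (fun l => G (φ l) (col i)) atTop (𝓝 (Gbar (col i))) :=
    fun i => ((ContinuousLinearMap.apply ℝ ℝ (col i)).continuous.tendsto _).comp hGlim
  have hBcol : ∀ i : Fin n, Tendsto (fun l => B (φ l) i) atTop (𝓝 (Gbar (col i))) :=
    fun i => ((ContinuousLinearMap.apply ℝ ℝ (col i)).continuous.tendsto _).comp (hBlim i)
  -- error sum tends to zero along the subsequence
  have herr : Tendsto (fun l => ∑ i : Fin n, (G (φ l) (col i) - B (φ l) i)
      * (xs i - p (φ l) i)) atTop (𝓝 0) := by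
    -- decompose
    have hdecomp : ∀ l, ∑ i : Fin n, (G (φ l) (col i) - B (φ l) i) * (xs i - p (φ l) i)
        = (∑ i : Fin n, (G (φ l) (col i) - B (φ l) i) * xs i)
          - (∑ i : Fin n, if i ∈ S then (G (φ l) (col i) - B (φ l) i) * p (φ l) i else 0)
          - (∑ i : Fin n, if i ∈ S then 0 else G (φ l) (col i) * p (φ l) i) := by
      intro l
      rw [← Finset.sum_sub_distrib, ← Finset.sum_sub_distrib]
      refine Finset.sum_congr rfl (fun i _ => ?_)
      by_cases hiS : i ∈ S
      · rw [if_pos hiS, if_pos hiS]; ring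
      · rw [if_neg hiS, if_neg hiS]
        have hcompl : B (φ l) i * p (φ l) i = 0 := ((hkkt (φ l) i).2 hiS).2
        nlinarith [hcompl]
    -- term 1
    have hterm1 : Tendsto (fun l => ∑ i : Fin n, (G (φ l) (col i) - B (φ l) i) * xs i)
        atTop (𝓝 0) := by
      have : Tendsto (fun l => ∑ i : Fin n, (G (φ l) (col i) - B (φ l) i) * xs i)
          atTop (𝓝 (∑ i : Fin n, (Gbar (col i) - Gbar (col i)) * xs i)) := by
        apply tendsto_finset_sum
        intro i _
        exact (((hGcol i).sub (hBcol i)).mul_const (xs i))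
      simpa using this
    -- term 2
    have hterm2 : Tendsto (fun l => ∑ i : Fin n,
        if i ∈ S then (G (φ l) (col i) - B (φ l) i) * p (φ l) i else 0) atTop (𝓝 0) := by
      have : Tendsto (fun l => ∑ i : Fin n,
          if i ∈ S then (G (φ l) (col i) - B (φ l) i) * p (φ l) i else 0) atTop
          (𝓝 (∑ i : Fin n, (0:ℝ))) := by
        apply tendsto_finset_sum
        intro i _
        by_cases hiS : i ∈ S
        · simp only [if_pos hiS]
          have hgt : Tendsto (fun l => |G (φ l) (col i) - B (φ l) i| * C) atTop (𝓝 0) := by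
            have h1 : Tendsto (fun l => |G (φ l) (col i) - B (φ l) i|) atTop (𝓝 |(0:ℝ)|) := by
              apply Tendsto.abs
              have := (hGcol i).sub (hBcol i)
              simpa using this
            have h2 := h1.mul_const C
            simpa using h2
          apply squeeze_zero_norm _ hgt
          intro l
          rw [Real.norm_eq_abs, abs_mul]
          exact mul_le_mul_of_nonneg_left (hpb (φ l) i hiS) (abs_nonneg _)
        · simp only [if_neg hiS]
          exact tendsto_const_nhds
      simpa using this
    -- term 3
    have hterm3 : Tendsto (fun l => ∑ i : Fin n,
        if i ∈ S then 0 else G (φ l) (col i) * p (φ l) i) atTop (𝓝 0) := by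
      set W : ℕ → Fin m → ℝ := fun r => ∑ i : Fin n,
        (if i ∈ S then 0 else p r i • col i) with hW
      have hs3W : ∀ r, ∑ i : Fin n, (if i ∈ S then 0 else G r (col i) * p r i) = G r (W r) := by
        intro r
        rw [hW, map_sum]
        refine Finset.sum_congr rfl (fun i _ => ?_)
        by_cases hiS : i ∈ S
        · simp [hiS]
        · simp only [if_neg hiS]
          rw [_root_.map_smul]
          simp [mul_comm]
      have hWbound : ∀ r, ‖W r‖ ≤ C + C * ∑ i ∈ S, ‖col i‖ := by
        intro r
        have hWeq : W r = t r n - ∑ i : Fin n, (if i ∈ S then p r i • col i else 0) := by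
          rw [hW, ← hpt r, hmv (p r)]
          rw [← Finset.sum_sub_distrib]
          refine Finset.sum_congr rfl (fun i _ => ?_)
          by_cases hiS : i ∈ S <;> simp [hiS]
        rw [hWeq]
        have h1 : ‖∑ i : Fin n, (if i ∈ S then p r i • col i else 0)‖
            ≤ ∑ i ∈ S, ‖p r i • col i‖ := by
          rw [Finset.sum_ite_mem, Finset.univ_inter]
          exact norm_sum_le _ _
        have h2 : ∑ i ∈ S, ‖p r i • col i‖ ≤ C * ∑ i ∈ S, ‖col i‖ := by
          rw [Finset.mul_sum]
          apply Finset.sum_le_sum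
          intro i hi
          rw [norm_smul, Real.norm_eq_abs]
          exact mul_le_mul_of_nonneg_right (hpb r i hi) (norm_nonneg _)
        calc ‖t r n - ∑ i : Fin n, (if i ∈ S then p r i • col i else 0)‖
            ≤ ‖t r n‖ + ‖∑ i : Fin n, (if i ∈ S then p r i • col i else 0)‖ := norm_sub_le _ _
          _ ≤ C + C * ∑ i ∈ S, ‖col i‖ := by
              have := htb r n le_rfl
              linarith
      -- split G r (W r) = (G r - Gbar)(W r) + Gbar (W r)
      have hGbarW : ∀ r, Gbar (W r) = ∑ i : Fin n,
          (if i ∈ S then 0 else p r i * Gbar (col i)) := by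
        intro r
        rw [hW, map_sum]
        refine Finset.sum_congr rfl (fun i _ => ?_)
        by_cases hiS : i ∈ S
        · simp [hiS]
        · simp only [if_neg hiS]
          rw [_root_.map_smul]
          rfl
      -- sign information on Gbar (col i) for i ∉ S
      have hsign : ∀ i : Fin n, i ∉ S → 0 ≤ Gbar (col i) := by
        intro i hiS
        exact ge_of_tendsto (hBcol i)
          (Eventually.of_forall (fun l => ((hkkt (φ l) i).2 hiS).1))
      -- eventually the coordinates with Gbar (col i) > 0 vanish
      have hvanish : ∀ᶠ l in atTop, ∀ i : Fin n, i ∉ S → 0 < Gbar (col i) → p (φ l) i = 0 := by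
        rw [eventually_all]
        intro i
        by_cases hiS : i ∈ S
        · exact Eventually.of_forall (fun l h => absurd hiS h)
        · by_cases hpos : 0 < Gbar (col i)
          · have hev : ∀ᶠ l in atTop, 0 < B (φ l) i :=
              (hBcol i).eventually (eventually_gt_nhds hpos |>.mono (fun x hx => hx))
            filter_upwards [hev] with l hl _ _
            have hcompl : B (φ l) i * p (φ l) i = 0 := ((hkkt (φ l) i).2 hiS).2
            rcases mul_eq_zero.1 hcompl with h | h
            · exact absurd h (ne_of_gt hl)
            · exact h
          · exact Eventually.of_forall (fun l _ hp => absurd hp hpos)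
      have hGbarW0 : ∀ᶠ l in atTop, Gbar (W (φ l)) = 0 := by
        filter_upwards [hvanish] with l hl
        rw [hGbarW]
        apply Finset.sum_eq_zero
        intro i _
        by_cases hiS : i ∈ S
        · simp [hiS]
        · simp only [if_neg hiS]
          rcases eq_or_lt_of_le (hsign i hiS) with heq | hpos
          · rw [← heq, mul_zero]
          · rw [hl i hiS hpos, zero_mul]
      have hdiff : Tendsto (fun l => (G (φ l) - Gbar) (W (φ l))) atTop (𝓝 0) := by
        have hgt : Tendsto (fun l => ‖G (φ l) - Gbar‖ * (C + C * ∑ i ∈ S, ‖col i‖))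
            atTop (𝓝 0) := by
          have h1 : Tendsto (fun l => ‖G (φ l) - Gbar‖) atTop (𝓝 0) := by
            have h0 : Tendsto (fun l => G (φ l) - Gbar) atTop (𝓝 (Gbar - Gbar)) :=
              hGlim.sub_const Gbar
            rw [sub_self] at h0
            exact tendsto_zero_iff_norm_tendsto_zero.1 h0
          have h2 := h1.mul_const (C + C * ∑ i ∈ S, ‖col i‖)
          simpa using h2
        apply squeeze_zero_norm _ hgt
        intro l
        calc ‖(G (φ l) - Gbar) (W (φ l))‖ ≤ ‖G (φ l) - Gbar‖ * ‖W (φ l)‖ :=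
            (G (φ l) - Gbar).le_opNorm _
          _ ≤ ‖G (φ l) - Gbar‖ * (C + C * ∑ i ∈ S, ‖col i‖) :=
            mul_le_mul_of_nonneg_left (hWbound (φ l)) (norm_nonneg _)
      have hfinal : Tendsto (fun l => G (φ l) (W (φ l))) atTop (𝓝 0) := by
        have heq : ∀ l, G (φ l) (W (φ l)) = (G (φ l) - Gbar) (W (φ l)) + Gbar (W (φ l)) := by
          intro l
          simp [ContinuousLinearMap.sub_apply]
        have h2 : Tendsto (fun l => Gbar (W (φ l))) atTop (𝓝 0) := by
          apply Tendsto.congr' (hGbarW0.mono (fun l hl => hl.symm))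
          exact tendsto_const_nhds
        have := hdiff.add h2
        rw [add_zero] at this
        exact this.congr (fun l => (heq l).symm)
      exact hfinal.congr (fun l => (hs3W (φ l)).symm)
    have := (hterm1.sub hterm2).sub hterm3
    rw [sub_zero, sub_zero] at this
    exact this.congr (fun l => (hdecomp l).symm)
  -- conclude
  have hΦφ : Tendsto (fun l => F (p (φ l))) atTop (𝓝 L) := hΦlim.comp hφat
  have hsumlim : Tendsto (fun l => F (p (φ l)) + ∑ i : Fin n,
      (G (φ l) (col i) - B (φ l) i) * (xs i - p (φ l) i)) atTop (𝓝 (L + 0)) :=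
    hΦφ.add herr
  rw [add_zero] at hsumlim
  exact le_of_tendsto hsumlim (Eventually.of_forall (fun l => hmain (φ l)))

/-- `t^{r,i} = E x^{r,i}` converges to `t*` for every `0 ≤ i ≤ n`. -/
theorem ccm_f1_t_converges
(m n : ℕ) (hm : 0 < m) (hn : 0 < n)
    (S : Finset (Fin n)) (lam : ℝ) (hlam : 0 < lam)
    (E : Matrix (Fin m) (Fin n) ℝ) (hE : ∀ j, ∃ i, E i j ≠ 0)
    (Dg : Set (Fin m → ℝ)) (gr : (Fin m → ℝ) → ℝ)
    (hDg : Convex ℝ Dg) (hgconv : ConvexOn ℝ Dg gr)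
    (hCg : (interior Dg).Nonempty)
    (hgs : StrictConvexOn ℝ (interior Dg) gr)
    (hgC2 : ContDiffOn ℝ 2 gr (interior Dg))
    (hhess : ∀ t ∈ interior Dg, ∀ v : Fin m → ℝ, v ≠ 0 → 0 < hessQF gr t v)
    (hA3 : (∀ t₀ ∈ frontier (interior Dg),
              Filter.Tendsto gr (nhdsWithin t₀ (interior Dg)) Filter.atTop)
           ∨ (S = Finset.univ ∧ (∀ t, 0 ≤ gr t) ∧ Dg = Set.univ))
    (X : Set (Fin n → ℝ)) (hX : X = {x | ∀ i ∉ S, 0 ≤ x i})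
    (F : (Fin n → ℝ) → ℝ)
    (hF : ∀ x, F x = gr (E.mulVec x) + lam * ∑ i ∈ S, |x i|)
    (XStar : Set (Fin n → ℝ))
    (hXStar : XStar = {x | x ∈ X ∧ E.mulVec x ∈ Dg ∧
                ∀ y ∈ X, E.mulVec y ∈ Dg → F x ≤ F y})
    (hXStarNe : XStar.Nonempty)
(tstar : Fin m → ℝ) (htstar : ∀ xs ∈ XStar, E.mulVec xs = tstar)
(x : ℕ → Fin n → ℝ) (xi : ℕ → ℕ → Fin n → ℝ)
    (hx0 : x 0 ∈ X) (hx0fin : E.mulVec (x 0) ∈ Dg)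
    (hxi0 : ∀ r, xi r 0 = x r)
    (hstep : ∀ r, ∀ i : Fin n,
        xi r ((i : ℕ) + 1) ∈ X ∧ E.mulVec (xi r ((i : ℕ) + 1)) ∈ Dg ∧
        (∀ j, j ≠ i → xi r ((i : ℕ) + 1) j = xi r (i : ℕ) j) ∧
        (∀ y ∈ X, (∀ j, j ≠ i → y j = xi r (i : ℕ) j) →
            E.mulVec y ∈ Dg → F (xi r ((i : ℕ) + 1)) ≤ F y))
    (hxsucc : ∀ r, x (r + 1) = xi r n) :
    ∀ i : ℕ, i ≤ n →
      Filter.Tendsto (fun r => euclNorm (E.mulVec (xi r i) - tstar)) Filter.atTop (nhds 0) := by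
    classical
  -- unpack the minimizer
  obtain ⟨xs, hxsmem⟩ := hXStarNe
  have hxsmem' : xs ∈ X ∧ E.mulVec xs ∈ Dg ∧ ∀ y ∈ X, E.mulVec y ∈ Dg → F xs ≤ F y := by
    rw [hXStar] at hxsmem; exact hxsmem
  obtain ⟨hxsX, hxsDg, hxsmin⟩ := hxsmem'
  have htsxs : E.mulVec xs = tstar := htstar xs hxsmem
  have htstar2 : ∀ y ∈ X, E.mulVec y ∈ Dg → F y = F xs → E.mulVec y = tstar := by
    intro y hy hyDg hFy
    apply htstar
    rw [hXStar]
    exact ⟨hy, hyDg, fun z hz hzDg => by rw [hFy]; exact hxsmin z hz hzDg⟩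
  -- openness of the domain
  have hID : interior Dg = Dg := by
    rcases hA3 with hbl | ⟨_, _, hDguniv⟩
    · exact Set.Subset.antisymm interior_subset (open_of_blowup hDg hCg hgconv hbl)
    · rw [hDguniv, interior_univ]
  have hO : IsOpen Dg := hID ▸ isOpen_interior
  have hgs' : StrictConvexOn ℝ Dg gr := hID ▸ hgs
  have hgC2' : ContDiffOn ℝ 2 gr Dg := hID ▸ hgC2
  have hgcont : ContinuousOn gr Dg := hgC2'.continuousOn
  have hgdiff : ∀ t ∈ Dg, DifferentiableAt ℝ gr t := by
    intro t ht
    have hd : DifferentiableOn ℝ gr Dg := hgC2'.differentiableOn (by norm_num)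
    exact hd.differentiableAt (hO.mem_nhds ht)
  have hgradcont : ContinuousOn (fderiv ℝ gr) Dg :=
    hgC2'.continuousOn_fderiv_of_isOpen hO (by norm_num)
  have hgradineq : ∀ a ∈ Dg, ∀ b ∈ Dg, gr a + fderiv ℝ gr a (b - a) ≤ gr b :=
    fun a ha b hb => grad_inequality hO hgconv hgdiff ha hb
  have hstrict : ∀ a ∈ Dg, ∀ b ∈ Dg, a ≠ b → gr ((1/2:ℝ) • (a + b)) < (gr a + gr b)/2 := by
    intro a ha b hb hne
    have h := hgs'.2 ha hb hne (by norm_num : (0:ℝ) < 1/2) (by norm_num : (0:ℝ) < 1/2)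
      (by norm_num)
    have h2 : (1/2:ℝ) • (a + b) = (1/2:ℝ) • a + (1/2:ℝ) • b := smul_add _ _ _
    rw [h2]
    have h3 : (1/2:ℝ) • gr a = (1/2) * gr a := rfl
    have h4 : (1/2:ℝ) • gr b = (1/2) * gr b := rfl
    rw [h3, h4] at h
    linarith
  -- limits with bounded g-values stay in Dg
  have hmemlim : ∀ (Cc : ℝ) (pp : ℕ → Fin m → ℝ) (q : Fin m → ℝ), (∀ k, pp k ∈ Dg) →
      (∀ k, gr (pp k) ≤ Cc) → Tendsto pp atTop (𝓝 q) → q ∈ Dg := by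
    intro Cc pp q hppDg hppb hql
    rcases hA3 with hbl | ⟨_, _, hDguniv⟩
    · by_contra hq
      have hfr : q ∈ frontier (interior Dg) := by
        rw [hID]
        constructor
        · exact mem_closure_of_tendsto hql (Eventually.of_forall hppDg)
        · rw [hID]; exact hq
      have hcomp := (hbl q hfr).comp
        (tendsto_nhdsWithin_of_tendsto_nhds_of_eventually_within pp hql
          (Eventually.of_forall (fun k => by rw [hID]; exact hppDg k)))
      obtain ⟨k, hk⟩ := (tendsto_atTop.1 hcomp (Cc + 1)).exists
      have := hppb k
      simp only [Function.comp] at hk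
      linarith
    · rw [hDguniv]; trivial
  -- feasibility of the iterates
  have hfeas0 : ∀ r, xi r 0 ∈ X ∧ E.mulVec (xi r 0) ∈ Dg := by
    intro r
    induction r with
    | zero => rw [hxi0]; exact ⟨hx0, hx0fin⟩
    | succ r ih =>
      obtain ⟨j, hjn, hj⟩ : ∃ j : ℕ, j < n ∧ j + 1 = n := ⟨n - 1, by omega, by omega⟩
      have hs := hstep r ⟨j, hjn⟩
      have hxeq : xi r n = xi r (j+1) := by rw [hj]
      rw [hxi0, hxsucc, hxeq]
      exact ⟨hs.1, hs.2.1⟩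
  have hfeas : ∀ r i, i ≤ n → xi r i ∈ X ∧ E.mulVec (xi r i) ∈ Dg := by
    intro r i hi
    cases i with
    | zero => exact hfeas0 r
    | succ i =>
      have hs := hstep r ⟨i, Nat.lt_of_succ_le hi⟩
      exact ⟨hs.1, hs.2.1⟩
  -- monotonicity of F along the iterates
  have hdec : ∀ r, ∀ i : Fin n, F (xi r ((i:ℕ)+1)) ≤ F (xi r (i:ℕ)) := by
    intro r i
    exact (hstep r i).2.2.2 (xi r (i:ℕ)) (hfeas r i (le_of_lt i.isLt)).1
      (fun j _ => rfl) (hfeas r i (le_of_lt i.isLt)).2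
  have hmono : ∀ r i j, j ≤ i → i ≤ n → F (xi r i) ≤ F (xi r j) := by
    intro r i
    induction i with
    | zero =>
      intro j hj _
      rw [Nat.le_zero.1 hj]
    | succ i ih =>
      intro j hj hin
      rcases Nat.lt_or_ge j (i+1) with h | h
      · have h1 := ih j (Nat.lt_succ_iff.1 h) (le_trans (Nat.le_succ i) hin)
        have h2 := hdec r ⟨i, Nat.lt_of_succ_le hin⟩
        exact le_trans h2 h1
      · have : j = i + 1 := le_antisymm hj h
        rw [this]
  set A : ℕ → ℝ := fun r => F (xi r 0) with hA
  have hAstep : ∀ r, A (r+1) = F (xi r n) := by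
    intro r
    show F (xi (r+1) 0) = F (xi r n)
    rw [hxi0, hxsucc]
  have hAmono : Antitone A := by
    apply antitone_nat_of_succ_le
    intro r
    rw [hAstep]
    exact hmono r n 0 (Nat.zero_le n) le_rfl
  have hFstarle : ∀ r i, i ≤ n → F xs ≤ F (xi r i) :=
    fun r i hi => hxsmin _ (hfeas r i hi).1 (hfeas r i hi).2
  have hbddA : BddBelow (Set.range A) := by
    refine ⟨F xs, ?_⟩
    rintro _ ⟨r, rfl⟩
    exact hFstarle r 0 (Nat.zero_le n)
  set L := ⨅ r, A r with hLdef
  have hAlim : Tendsto A atTop (𝓝 L) := tendsto_atTop_ciInf hAmono hbddA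
  have hΦlim : ∀ i, i ≤ n → Tendsto (fun r => F (xi r i)) atTop (𝓝 L) := by
    intro i hi
    have hub : ∀ r, F (xi r i) ≤ A r := fun r => hmono r i 0 (Nat.zero_le i) hi
    have hlb : ∀ r, A (r+1) ≤ F (xi r i) := by
      intro r
      rw [hAstep]
      exact hmono r n i hi le_rfl
    exact tendsto_of_tendsto_of_tendsto_of_le_of_le
      (hAlim.comp (tendsto_add_atTop_nat 1)) hAlim hlb hub
  set M0 := A 0 with hM0
  have hΦleM0 : ∀ r i, i ≤ n → F (xi r i) ≤ M0 := fun r i hi =>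
    le_trans (hmono r i 0 (Nat.zero_le i) hi) (hAmono (Nat.zero_le r))
  have hgF : ∀ x, gr (E.mulVec x) ≤ F x := by
    intro x
    rw [hF]
    have : 0 ≤ lam * ∑ i ∈ S, |x i| :=
      mul_nonneg (le_of_lt hlam) (Finset.sum_nonneg (fun i _ => abs_nonneg _))
    linarith
  have hgb : ∀ r i, i ≤ n → gr (E.mulVec (xi r i)) ≤ M0 :=
    fun r i hi => le_trans (hgF _) (hΦleM0 r i hi)
  -- coordinate stability within a cycle
  have hstab : ∀ r, ∀ i : Fin n, ∀ k, (i:ℕ)+1 ≤ k → k ≤ n → xi r k i = xi r ((i:ℕ)+1) i := by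
    intro r i k
    induction k with
    | zero => omega
    | succ k ih =>
      intro h1 h2
      rcases Nat.lt_or_ge ((i:ℕ)+1) (k+1) with hlt | hge
      · have hkn : k < n := h2
        have hne : i ≠ (⟨k, hkn⟩ : Fin n) := by
          intro hc
          have : (i:ℕ) = k := by rw [hc]
          omega
        have hs := (hstep r ⟨k, hkn⟩).2.2.1 i hne
        rw [hs]
        exact ih (by omega) (by omega)
      · have : (i:ℕ) + 1 = k + 1 := le_antisymm h1 hge
        rw [← this]
  -- KKT conditions at each coordinate step
  have hkkt1 : ∀ r, ∀ i : Fin n,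
      (i ∈ S → |fderiv ℝ gr (E.mulVec (xi r ((i:ℕ)+1))) (fun k => E k i)| ≤ lam ∧
          fderiv ℝ gr (E.mulVec (xi r ((i:ℕ)+1))) (fun k => E k i) * xi r ((i:ℕ)+1) i
            = -(lam * |xi r ((i:ℕ)+1) i|)) ∧
      (i ∉ S → 0 ≤ fderiv ℝ gr (E.mulVec (xi r ((i:ℕ)+1))) (fun k => E k i) ∧
          fderiv ℝ gr (E.mulVec (xi r ((i:ℕ)+1))) (fun k => E k i) * xi r ((i:ℕ)+1) i = 0) := by
    intro r i
    have hp1 := hfeas r ((i:ℕ)+1) i.isLt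
    have hminp : ∀ y ∈ X, (∀ j, j ≠ i → y j = xi r ((i:ℕ)+1) j) →
        E.mulVec y ∈ Dg → F (xi r ((i:ℕ)+1)) ≤ F y := by
      intro y hy hagree hyDg
      apply (hstep r i).2.2.2 y hy _ hyDg
      intro j hj
      rw [hagree j hj, (hstep r i).2.2.1 j hj]
    exact kkt_step hlam hO hgdiff hX hF hp1.1 hp1.2 i hminp
  -- boundedness of the iterates
  obtain ⟨C, hC⟩ : ∃ C, ∀ k, ‖E.mulVec (xi (k / (n+1)) (k % (n+1)))‖ ≤ C ∧
      ∀ j ∈ S, |xi (k / (n+1)) (k % (n+1)) j| ≤ C := by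
    have hmodle : ∀ k : ℕ, k % (n+1) ≤ n := fun k =>
      Nat.lt_succ_iff.1 (Nat.mod_lt k (Nat.succ_pos n))
    exact bounded_iterates hlam hO hDg hgconv hgcont hmemlim hX hF hxsX hxsDg hxsmin
      htsxs htstar2 (fun k => xi (k / (n+1)) (k % (n+1)))
      (fun k => (hfeas _ _ (hmodle k)).1) (fun k => (hfeas _ _ (hmodle k)).2)
      (fun k => hΦleM0 _ _ (hmodle k))
  have hCall : ∀ r i, i ≤ n → ‖E.mulVec (xi r i)‖ ≤ C ∧ ∀ j ∈ S, |xi r i j| ≤ C := by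
    intro r i hi
    have hk := hC ((n+1) * r + i)
    have hdiv : ((n+1) * r + i) / (n+1) = r := by
      rw [Nat.mul_add_div (Nat.succ_pos n)]
      rw [Nat.div_eq_of_lt (Nat.lt_succ_of_le hi)]
      omega
    have hmod : ((n+1) * r + i) % (n+1) = i := by
      rw [Nat.mul_add_mod]
      exact Nat.mod_eq_of_lt (Nat.lt_succ_of_le hi)
    rw [hdiv, hmod] at hk
    exact hk
  -- midpoint inequalities
  have hmidX : ∀ u v, u ∈ X → v ∈ X → (1/2:ℝ) • (u + v) ∈ X := by
    intro u v hu hv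
    rw [hX] at hu hv ⊢
    intro j hj
    have h1 := hu j hj
    have h2 := hv j hj
    have : ((1/2:ℝ) • (u + v)) j = (1/2) * (u j + v j) := rfl
    rw [this]
    linarith
  have hEmid : ∀ u v : Fin n → ℝ, E.mulVec ((1/2:ℝ) • (u + v))
      = (1/2:ℝ) • (E.mulVec u + E.mulVec v) := by
    intro u v
    rw [Matrix.mulVec_smul, Matrix.mulVec_add]
  have hmidDg : ∀ u v : Fin m → ℝ, u ∈ Dg → v ∈ Dg → (1/2:ℝ) • (u + v) ∈ Dg := by
    intro u v hu hv
    have := hDg hu hv (by norm_num : (0:ℝ) ≤ 1/2) (by norm_num : (0:ℝ) ≤ 1/2) (by norm_num)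
    simpa [smul_add] using this
  have hmidF : ∀ u v : Fin n → ℝ, F ((1/2:ℝ) • (u + v))
      ≤ (F u + F v)/2 - ((gr (E.mulVec u) + gr (E.mulVec v))/2
        - gr ((1/2:ℝ) • (E.mulVec u + E.mulVec v))) := by
    intro u v
    rw [hF ((1/2:ℝ) • (u + v)), hF u, hF v, hEmid]
    have habs : ∑ i ∈ S, |((1/2:ℝ) • (u + v)) i| ≤ (∑ i ∈ S, |u i| + ∑ i ∈ S, |v i|)/2 := by
      have h1 : ∀ i, |((1/2:ℝ) • (u + v)) i| ≤ (|u i| + |v i|)/2 := by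
        intro i
        have he : ((1/2:ℝ) • (u + v)) i = (1/2) * (u i + v i) := rfl
        rw [he, abs_mul]
        have h2 : |(1/2 : ℝ)| = 1/2 := by norm_num
        rw [h2]
        have h3 := abs_add_le (u i) (v i)
        nlinarith
      calc ∑ i ∈ S, |((1/2:ℝ) • (u + v)) i| ≤ ∑ i ∈ S, (|u i| + |v i|)/2 :=
            Finset.sum_le_sum (fun i _ => h1 i)
        _ = (∑ i ∈ S, |u i| + ∑ i ∈ S, |v i|)/2 := by
            rw [← Finset.sum_add_distrib, Finset.sum_div]
    have hmul := mul_le_mul_of_nonneg_left habs (le_of_lt hlam)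
    linarith
  -- gap between consecutive iterates tends to zero
  have hgaplb : ∀ u v : Fin m → ℝ, u ∈ Dg → v ∈ Dg →
      0 ≤ (gr u + gr v)/2 - gr ((1/2:ℝ) • (u + v)) := by
    intro u v hu hv
    have := hgconv.2 hu hv (by norm_num : (0:ℝ) ≤ 1/2) (by norm_num : (0:ℝ) ≤ 1/2)
      (by norm_num)
    have h2 : (1/2:ℝ) • (u + v) = (1/2:ℝ) • u + (1/2:ℝ) • v := smul_add _ _ _
    rw [h2]
    have h3 : (1/2:ℝ) • gr u = (1/2) * gr u := rfl
    have h4 : (1/2:ℝ) • gr v = (1/2) * gr v := rfl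
    rw [h3, h4] at this
    linarith
  have hgapub : ∀ r, ∀ i : Fin n,
      (gr (E.mulVec (xi r (i:ℕ))) + gr (E.mulVec (xi r ((i:ℕ)+1))))/2
        - gr ((1/2:ℝ) • (E.mulVec (xi r (i:ℕ)) + E.mulVec (xi r ((i:ℕ)+1))))
      ≤ (F (xi r (i:ℕ)) - F (xi r ((i:ℕ)+1)))/2 := by
    intro r i
    set u := xi r (i:ℕ) with hu
    set v := xi r ((i:ℕ)+1) with hv
    have huX := (hfeas r (i:ℕ) (le_of_lt i.isLt)).1
    have hvX := (hfeas r ((i:ℕ)+1) i.isLt).1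
    have huDg := (hfeas r (i:ℕ) (le_of_lt i.isLt)).2
    have hvDg := (hfeas r ((i:ℕ)+1) i.isLt).2
    have hmidmem : (1/2:ℝ) • (u + v) ∈ X := hmidX u v huX hvX
    have hmidDgmem : E.mulVec ((1/2:ℝ) • (u + v)) ∈ Dg := by
      rw [hEmid]
      exact hmidDg _ _ huDg hvDg
    have hagree : ∀ j, j ≠ i → ((1/2:ℝ) • (u + v)) j = u j := by
      intro j hj
      have hvj : v j = u j := (hstep r i).2.2.1 j hj
      show (1/2:ℝ) * (u j + v j) = u j
      rw [hvj]
      ring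
    have hminmid := (hstep r i).2.2.2 ((1/2:ℝ) • (u + v)) hmidmem hagree hmidDgmem
    have hmid := hmidF u v
    linarith
  have hgapto0 : ∀ i, i < n → Tendsto (fun r =>
      (gr (E.mulVec (xi r i)) + gr (E.mulVec (xi r (i+1))))/2
        - gr ((1/2:ℝ) • (E.mulVec (xi r i) + E.mulVec (xi r (i+1))))) atTop (𝓝 0) := by
    intro i hi
    have hub : Tendsto (fun r => (F (xi r i) - F (xi r (i+1)))/2) atTop (𝓝 0) := by
      have := ((hΦlim i (le_of_lt hi)).sub (hΦlim (i+1) hi)).div_const 2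
      simpa using this
    apply tendsto_of_tendsto_of_tendsto_of_le_of_le tendsto_const_nhds hub
    · intro r
      exact hgaplb _ _ (hfeas r i (le_of_lt hi)).2 (hfeas r (i+1) hi).2
    · intro r
      exact hgapub r ⟨i, hi⟩
  -- apply the cluster lemma : L ≤ F xs
  have hLle : L ≤ F xs := by
    have hkktp : ∀ r, ∀ i : Fin n,
        (i ∈ S → |fderiv ℝ gr (E.mulVec (xi r ((i:ℕ)+1))) (fun k => E k i)| ≤ lam ∧
            fderiv ℝ gr (E.mulVec (xi r ((i:ℕ)+1))) (fun k => E k i) * xi r n i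
              = -(lam * |xi r n i|)) ∧
        (i ∉ S → 0 ≤ fderiv ℝ gr (E.mulVec (xi r ((i:ℕ)+1))) (fun k => E k i) ∧
            fderiv ℝ gr (E.mulVec (xi r ((i:ℕ)+1))) (fun k => E k i) * xi r n i = 0) := by
      intro r i
      have hst : xi r n i = xi r ((i:ℕ)+1) i := hstab r i n i.isLt le_rfl
      rw [hst]
      exact hkkt1 r i
    exact cluster_le hlam hO hDg hgcont hgradcont hgradineq hstrict hmemlim hX hF
      hxsX hxsDg (fun r i => E.mulVec (xi r i))
      (fun r i hi => (hfeas r i hi).2) hgb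
      (fun r i hi => (hCall r i hi).1)
      (fun r => xi r n) (fun r => (hfeas r n le_rfl).1) (fun r => rfl)
      (fun r j hj => (hCall r n le_rfl).2 j hj)
      hkktp hgapto0 (hΦlim n le_rfl)
  have hLge : F xs ≤ L :=
    ge_of_tendsto (hΦlim n le_rfl) (Eventually.of_forall (fun r => hFstarle r n le_rfl))
  have hLF : L = F xs := le_antisymm hLle hLge
  -- now prove the claimed convergence for every stage i
  intro i hi
  -- the gap towards tstar tends to zero
  have htstarDg : tstar ∈ Dg := htsxs ▸ hxsDg
  have hds : ∀ r, (gr (E.mulVec (xi r i)) + gr tstar)/2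
      - gr ((1/2:ℝ) • (E.mulVec (xi r i) + tstar)) ≤ (F (xi r i) - F xs)/2 := by
    intro r
    have hmidmem : (1/2:ℝ) • (xi r i + xs) ∈ X := hmidX _ _ (hfeas r i hi).1 hxsX
    have hmidDgmem : E.mulVec ((1/2:ℝ) • (xi r i + xs)) ∈ Dg := by
      rw [hEmid]
      exact hmidDg _ _ (hfeas r i hi).2 hxsDg
    have h1 := hxsmin _ hmidmem hmidDgmem
    have h2 := hmidF (xi r i) xs
    rw [htsxs] at h2
    linarith
  have hds0 : ∀ r, 0 ≤ (gr (E.mulVec (xi r i)) + gr tstar)/2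
      - gr ((1/2:ℝ) • (E.mulVec (xi r i) + tstar)) := by
    intro r
    exact hgaplb _ _ (hfeas r i hi).2 htstarDg
  have hdlim : Tendsto (fun r => (gr (E.mulVec (xi r i)) + gr tstar)/2
      - gr ((1/2:ℝ) • (E.mulVec (xi r i) + tstar))) atTop (𝓝 0) := by
    have hub : Tendsto (fun r => (F (xi r i) - F xs)/2) atTop (𝓝 0) := by
      have h1 := ((hΦlim i hi).sub_const (F xs)).div_const 2
      rw [hLF] at h1
      simpa using h1
    exact tendsto_of_tendsto_of_tendsto_of_le_of_le tendsto_const_nhds hub hds0 hds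
  -- convergence of the t's to tstar
  have httend : Tendsto (fun r => E.mulVec (xi r i)) atTop (𝓝 tstar) := by
    apply tendsto_of_subseq_tendsto
    intro ns hns
    have hmemball : ∀ l, E.mulVec (xi (ns l) i) ∈ Metric.closedBall (0 : Fin m → ℝ) C := by
      intro l
      rw [Metric.mem_closedBall, dist_zero_right]
      exact (hCall (ns l) i hi).1
    obtain ⟨q, hqmem, ms, hms, hqlim⟩ :=
      (isCompact_closedBall (0 : Fin m → ℝ) C).tendsto_subseq hmemball
    have hnsms : Tendsto (fun j => ns (ms j)) atTop atTop := hns.comp hms.tendsto_atTop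
    have hqDg : q ∈ Dg := hmemlim M0 (fun j => E.mulVec (xi (ns (ms j)) i)) q
      (fun j => (hfeas (ns (ms j)) i hi).2) (fun j => hgb (ns (ms j)) i hi) hqlim
    have hmidq : (1/2:ℝ) • (q + tstar) ∈ Dg := hmidDg _ _ hqDg htstarDg
    have hgapq : (gr q + gr tstar)/2 - gr ((1/2:ℝ) • (q + tstar)) = 0 := by
      have hlim1 : Tendsto (fun j => (gr (E.mulVec (xi (ns (ms j)) i)) + gr tstar)/2
          - gr ((1/2:ℝ) • (E.mulVec (xi (ns (ms j)) i) + tstar))) atTop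
          (𝓝 ((gr q + gr tstar)/2 - gr ((1/2:ℝ) • (q + tstar)))) := by
        have hg1 : Tendsto (fun j => gr (E.mulVec (xi (ns (ms j)) i))) atTop (𝓝 (gr q)) :=
          ((hgcont.continuousAt (hO.mem_nhds hqDg)).tendsto).comp hqlim
        have hg2 : Tendsto (fun j => (1/2:ℝ) • (E.mulVec (xi (ns (ms j)) i) + tstar)) atTop
            (𝓝 ((1/2:ℝ) • (q + tstar))) := (hqlim.add_const tstar).const_smul _
        have hg3 : Tendsto (fun j => gr ((1/2:ℝ) • (E.mulVec (xi (ns (ms j)) i) + tstar)))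
            atTop (𝓝 (gr ((1/2:ℝ) • (q + tstar)))) :=
          ((hgcont.continuousAt (hO.mem_nhds hmidq)).tendsto).comp hg2
        exact ((hg1.add_const (gr tstar)).div_const 2).sub hg3
      have hlim2 := hdlim.comp hnsms
      exact tendsto_nhds_unique hlim1 hlim2
    have hqeq : q = tstar := by
      by_contra hne
      have := hstrict q hqDg tstar htstarDg hne
      linarith
    exact ⟨ms, hqeq ▸ hqlim⟩
  -- conclude for the Euclidean norm
  have hcoords := tendsto_pi_nhds.1 httend
  have hsq : Tendsto (fun r => ∑ j, ((E.mulVec (xi r i) - tstar) j)^2) atTop (𝓝 0) := by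
    have h1 : Tendsto (fun r => ∑ j, ((E.mulVec (xi r i) - tstar) j)^2) atTop
        (𝓝 (∑ j : Fin m, (0:ℝ))) := by
      apply tendsto_finset_sum
      intro j _
      have h2 : Tendsto (fun r => (E.mulVec (xi r i) - tstar) j) atTop (𝓝 0) := by
        have := (hcoords j).sub_const (tstar j)
        rw [sub_self] at this
        exact this.congr (fun r => rfl)
      have h3 := h2.mul h2
      rw [mul_zero] at h3
      exact h3.congr (fun r => (pow_two ((E.mulVec (xi r i) - tstar) j)).symm)
    simpa using h1
  have hfin : Tendsto (fun r => Real.sqrt (∑ j, ((E.mulVec (xi r i) - tstar) j)^2))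
      atTop (𝓝 (Real.sqrt 0)) :=
    (Real.continuous_sqrt.tendsto 0).comp hsq
  rw [Real.sqrt_zero] at hfin
  have henorm : ∀ v : Fin m → ℝ, euclNorm v = Real.sqrt (∑ j, v j ^ 2) := fun v => rfl
  exact hfin.congr (fun r => (henorm _).symm)
end
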